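/- arXiv:2601.10249 — 3 statements merged into one kernel-verified Lean document; each statement's English description precedes it below -/
import Mathlib

section
/- Properties of the function Ĩ_p (Claim 'Properties of the function Ĩ_p'): Fix an integer Δ ≥ 3. There exists ε₀ > 0 such that for every ε ∈ (0,ε₀) and every r ∈ R_Δ, the function Ĩ_p(x) := e^{−x} · (1 + ε · Σ_{k=1}^{Δ−2} (x^k/k!) · s_{k+2}) is strictly decreasing on [0,∞), satisfies Ĩ_p'(x) ≤ −(1/2)·e^{−x} for all x ≥ 0, and is convex on the interval [0, (1/(2εΔ))^{1/Δ}]. -/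
open Real MeasureTheory Filter

noncomputable section

/-- Tail sums: `s_k = Σ_{d=k}^Δ r_d` (also used as `q_k` for distributions `p`). -/
def tailS (Δ : ℕ) (r : ℕ → ℝ) (k : ℕ) : ℝ := ∑ d ∈ Finset.Icc k Δ, r d

/-- Membership in the set `R_Δ`: `r_2 = -1`, `r_k ≥ 0` for `3 ≤ k ≤ Δ`, `r_k = 0` for `k > Δ`,
and `Σ_{k=3}^Δ r_k = 1`. -/
def memR (Δ : ℕ) (r : ℕ → ℝ) : Prop :=
  r 2 = -1 ∧ (∀ k, 3 ≤ k → k ≤ Δ → 0 ≤ r k) ∧ (∀ k, Δ < k → r k = 0) ∧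
    (∑ k ∈ Finset.Icc 3 Δ, r k) = 1

/-- The Molloy–Reed constant `Υ_r = Σ_{k=3}^Δ k(k-2) r_k`. -/
def Upsilon (Δ : ℕ) (r : ℕ → ℝ) : ℝ := ∑ k ∈ Finset.Icc 3 Δ, (k : ℝ) * ((k : ℝ) - 2) * r k

/-- `Λ_r(t) = λ'(t) · ∫_0^{λ(t)} e^x/(1+x)² · (Σ_{k=2}^{Δ-1} x^k/k! · s_{k+1}) dx`. -/
def LamErr (lam : ℝ → ℝ) (Δ : ℕ) (r : ℕ → ℝ) (t : ℝ) : ℝ :=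
  deriv lam t * ∫ x in (0:ℝ)..(lam t),
    Real.exp x / (1 + x) ^ 2 *
      ∑ k ∈ Finset.Icc 2 (Δ - 1), x ^ k / (Nat.factorial k : ℝ) * tailS Δ r (k + 1)

/-- `H_r(t) = e^{-λ(t)} (Λ_r'(t) - λ'(t)Λ_r(t) + λ'(t) Σ_{k=0}^{Δ-2} λ(t)^k/k! · r_{k+2})`. -/
def Herr (lam : ℝ → ℝ) (Δ : ℕ) (r : ℕ → ℝ) (t : ℝ) : ℝ :=
  Real.exp (-lam t) *
    (deriv (LamErr lam Δ r) t - deriv lam t * LamErr lam Δ r t +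
      deriv lam t * ∑ k ∈ Finset.range (Δ - 1), lam t ^ k / (Nat.factorial k : ℝ) * r (k + 2))

/-- `I_r(t) = e^{-λ(t)} ( -Λ_r(t) + Σ_{k=1}^{Δ-2} λ(t)^k/k! · s_{k+2})`. -/
def Ierr (lam : ℝ → ℝ) (Δ : ℕ) (r : ℕ → ℝ) (t : ℝ) : ℝ :=
  Real.exp (-lam t) *
    (-LamErr lam Δ r t +
      ∑ k ∈ Finset.Icc 1 (Δ - 2), lam t ^ k / (Nat.factorial k : ℝ) * tailS Δ r (k + 2))

/-- `u(t) = 1 + λ(t) ∫_0^t (λ'(s)-1)/λ(s)² ds`. -/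
def uAux (lam : ℝ → ℝ) (t : ℝ) : ℝ :=
  1 + lam t * ∫ s in (0:ℝ)..t, (deriv lam s - 1) / (lam s) ^ 2

/-- `α_r(t) = -∫_0^t u(s) H_r(s) λ(s) ds`. -/
def alphaAux (lam : ℝ → ℝ) (Δ : ℕ) (r : ℕ → ℝ) (t : ℝ) : ℝ :=
  -∫ s in (0:ℝ)..t, uAux lam s * Herr lam Δ r s * lam s

/-- `β_r(t) = ∫_0^t H_r(s) λ(s)² ds`. -/
def betaAux (lam : ℝ → ℝ) (Δ : ℕ) (r : ℕ → ℝ) (t : ℝ) : ℝ :=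
  ∫ s in (0:ℝ)..t, Herr lam Δ r s * (lam s) ^ 2

/-- `ω_r(t) = α_r(t) λ(t) + β_r(t) u(t)`. -/
def omegaAux (lam : ℝ → ℝ) (Δ : ℕ) (r : ℕ → ℝ) (t : ℝ) : ℝ :=
  alphaAux lam Δ r t * lam t + betaAux lam Δ r t * uAux lam t

/-- `t^-_{p,δ} = (1-δ)/(ε Υ_r)`. -/
def tMinus (Δ : ℕ) (r : ℕ → ℝ) (ε δ : ℝ) : ℝ := (1 - δ) / (ε * Upsilon Δ r)

/-- `t^+_{p,δ} = (1+δ)/(ε Υ_r)`. -/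
def tPlus (Δ : ℕ) (r : ℕ → ℝ) (ε δ : ℝ) : ℝ := (1 + δ) / (ε * Upsilon Δ r)

/-- `w^-_{p,δ}`. -/
def wMinus (lam : ℝ → ℝ) (Δ : ℕ) (r : ℕ → ℝ) (ε δ : ℝ) (t : ℝ) : ℝ :=
  if t ≤ tMinus Δ r ε δ then lam t + (1 + δ / 2) * ε * omegaAux lam Δ r t
  else lam (tMinus Δ r ε δ) + (1 + δ / 2) * ε * omegaAux lam Δ r (tMinus Δ r ε δ)

/-- `w^+_{p,δ}`. -/
def wPlus (lam : ℝ → ℝ) (Δ : ℕ) (r : ℕ → ℝ) (ε δ : ℝ) (t : ℝ) : ℝ :=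
  if t ≤ tPlus Δ r ε δ then lam t + (1 - δ / 2) * ε * omegaAux lam Δ r t
  else lam (tPlus Δ r ε δ) + (1 - δ / 2) * ε * omegaAux lam Δ r (tPlus Δ r ε δ)

/-- `Ī^-_{p,δ}(t) = e^{-λ(t)} + (1-δ) ε I_r(t)`. -/
def IbarMinus (lam : ℝ → ℝ) (Δ : ℕ) (r : ℕ → ℝ) (ε δ : ℝ) (t : ℝ) : ℝ :=
  Real.exp (-lam t) + (1 - δ) * ε * Ierr lam Δ r t

/-- `Ī^+_{p,δ}(t) = e^{-λ(t)} + (1+δ) ε I_r(t)`. -/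
def IbarPlus (lam : ℝ → ℝ) (Δ : ℕ) (r : ℕ → ℝ) (ε δ : ℝ) (t : ℝ) : ℝ :=
  Real.exp (-lam t) + (1 + δ) * ε * Ierr lam Δ r t

/-- `Ĩ_p(x) = e^{-x} (1 + ε Σ_{k=1}^{Δ-2} x^k/k! · s_{k+2})`. -/
def Itilde (Δ : ℕ) (r : ℕ → ℝ) (ε : ℝ) (x : ℝ) : ℝ :=
  Real.exp (-x) *
    (1 + ε * ∑ k ∈ Finset.Icc 1 (Δ - 2), x ^ k / (Nat.factorial k : ℝ) * tailS Δ r (k + 2))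

namespace ItildeAux

/-- `Q N a x = Σ_{i<N} x^{i+1}/(i+1)! a_i`. -/
def Q (N : ℕ) (a : ℕ → ℝ) (x : ℝ) : ℝ :=
  ∑ i ∈ Finset.range N, x ^ (i + 1) / (Nat.factorial (i + 1) : ℝ) * a i

/-- `Q' N a x = Σ_{i<N} x^i/i! a_i`, the derivative of `Q`. -/
def Q' (N : ℕ) (a : ℕ → ℝ) (x : ℝ) : ℝ :=
  ∑ i ∈ Finset.range N, x ^ i / (Nat.factorial i : ℝ) * a i

/-- Truncated exponential series. -/
def E (m : ℕ) (x : ℝ) : ℝ := ∑ i ∈ Finset.range m, x ^ i / (Nat.factorial i : ℝ)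

lemma hasDerivAt_Q (N : ℕ) (a : ℕ → ℝ) (x : ℝ) :
    HasDerivAt (Q N a) (Q' N a x) x := by
  have h : ∀ i ∈ Finset.range N,
      HasDerivAt (fun y : ℝ => y ^ (i + 1) / (Nat.factorial (i + 1) : ℝ) * a i)
        (x ^ i / (Nat.factorial i : ℝ) * a i) x := by
    intro i _
    have h := ((hasDerivAt_pow (i + 1) x).div_const
      (Nat.factorial (i + 1) : ℝ)).mul_const (a i)
    refine h.congr_deriv ?_
    have hfac : ((Nat.factorial (i + 1)) : ℝ) = (i + 1) * (Nat.factorial i : ℝ) := by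
      rw [Nat.factorial_succ]; push_cast; ring
    have hi : (Nat.factorial i : ℝ) ≠ 0 := Nat.cast_ne_zero.2 (Nat.factorial_ne_zero i)
    have hi1 : ((i : ℝ) + 1) ≠ 0 := by positivity
    rw [hfac]
    simp only [Nat.add_sub_cancel]
    push_cast
    field_simp
  exact HasDerivAt.fun_sum h

lemma Q'_eq (N : ℕ) (hN : 1 ≤ N) (a : ℕ → ℝ) (x : ℝ) :
    Q' N a x = Q (N - 1) (fun i => a (i + 1)) x + a 0 := by
  obtain ⟨M, rfl⟩ : ∃ M, N = M + 1 := ⟨N - 1, (Nat.succ_pred_eq_of_pos hN).symm⟩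
  simp [Q', Q, Finset.sum_range_succ']

lemma hasDerivAt_Q' (N : ℕ) (hN : 1 ≤ N) (a : ℕ → ℝ) (x : ℝ) :
    HasDerivAt (Q' N a) (Q' (N - 1) (fun i => a (i + 1)) x) x := by
  have : Q' N a = fun y => Q (N - 1) (fun i => a (i + 1)) y + a 0 := by
    funext y; exact Q'_eq N hN a y
  rw [this]
  exact (hasDerivAt_Q _ _ x).add_const _

lemma Q_nonneg {N : ℕ} {a : ℕ → ℝ} {x : ℝ} (hx : 0 ≤ x) (ha : ∀ i, 0 ≤ a i) :
    0 ≤ Q N a x := by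
  refine Finset.sum_nonneg fun i _ => ?_
  have := ha i
  positivity

lemma Q'_nonneg {N : ℕ} {a : ℕ → ℝ} {x : ℝ} (hx : 0 ≤ x) (ha : ∀ i, 0 ≤ a i) :
    0 ≤ Q' N a x := by
  refine Finset.sum_nonneg fun i _ => ?_
  have := ha i
  positivity

lemma Q'_le_E {N : ℕ} {a : ℕ → ℝ} {x : ℝ} (hx : 0 ≤ x) (ha0 : ∀ i, 0 ≤ a i)
    (ha1 : ∀ i, a i ≤ 1) : Q' N a x ≤ E (N + 1) x := by
  have h1 : Q' N a x ≤ ∑ i ∈ Finset.range N, x ^ i / (Nat.factorial i : ℝ) := by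
    refine Finset.sum_le_sum fun i _ => ?_
    have hpos : (0:ℝ) ≤ x ^ i / (Nat.factorial i : ℝ) := by positivity
    calc x ^ i / (Nat.factorial i : ℝ) * a i
        ≤ x ^ i / (Nat.factorial i : ℝ) * 1 := by
          exact mul_le_mul_of_nonneg_left (ha1 i) hpos
      _ = x ^ i / (Nat.factorial i : ℝ) := by ring
  refine h1.trans ?_
  unfold E
  refine Finset.sum_le_sum_of_subset_of_nonneg
    (Finset.range_subset_range.2 (Nat.le_succ N)) fun i _ _ => by positivity

lemma Q'_sub_Q_le_one {N : ℕ} {a : ℕ → ℝ} {x : ℝ} (hN : 1 ≤ N) (hx : 0 ≤ x)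
    (ha0 : a 0 = 1) (hmono : ∀ i, a (i + 1) ≤ a i) (hnn : ∀ i, 0 ≤ a i) :
    Q' N a x ≤ Q N a x + 1 := by
  rw [Q'_eq N hN a x, ha0]
  have h1 : Q (N - 1) (fun i => a (i + 1)) x ≤ Q (N - 1) a x := by
    refine Finset.sum_le_sum fun i _ => ?_
    have hpos : (0:ℝ) ≤ x ^ (i + 1) / (Nat.factorial (i + 1) : ℝ) := by positivity
    exact mul_le_mul_of_nonneg_left (hmono i) hpos
  have h2 : Q (N - 1) a x ≤ Q N a x := by
    refine Finset.sum_le_sum_of_subset_of_nonneg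
      (Finset.range_subset_range.2 (Nat.sub_le N 1)) fun i _ _ => ?_
    have := hnn i
    positivity
  linarith

end ItildeAux

open ItildeAux in
lemma Itilde_eq_Q (Δ : ℕ) (r : ℕ → ℝ) (ε : ℝ) :
    Itilde Δ r ε = fun x =>
      Real.exp (-x) * (1 + ε * Q (Δ - 2) (fun i => tailS Δ r (i + 3)) x) := by
  have hIcc : ∀ (g : ℕ → ℝ) (n : ℕ),
      ∑ k ∈ Finset.Icc 1 n, g k = ∑ i ∈ Finset.range n, g (i + 1) := by
    intro g n
    rw [← Finset.Ico_add_one_right_eq_Icc, Finset.sum_Ico_eq_sum_range]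
    simp only [Nat.add_sub_cancel]
    exact Finset.sum_congr rfl fun i _ => by rw [Nat.add_comm]
  funext x
  unfold Itilde ItildeAux.Q
  rw [hIcc]

/-- Properties of `Ĩ_p`: strictly decreasing on `[0,∞)`, derivative at most `-e^{-x}/2`,
and convex on `[0, (1/(2εΔ))^{1/Δ}]`, for all small enough `ε`. -/
theorem Itilde_properties (Δ : ℕ) (hΔ : 3 ≤ Δ) :
    ∃ ε₀ : ℝ, 0 < ε₀ ∧ ∀ ε : ℝ, 0 < ε → ε < ε₀ → ∀ r : ℕ → ℝ, memR Δ r →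
      StrictAntiOn (Itilde Δ r ε) (Set.Ici 0) ∧
      (∀ x : ℝ, 0 ≤ x → deriv (Itilde Δ r ε) x ≤ -(1 / 2) * Real.exp (-x)) ∧
      ConvexOn ℝ (Set.Icc 0 ((1 / (2 * ε * (Δ : ℝ))) ^ ((Δ : ℝ)⁻¹))) (Itilde Δ r ε) := by
  classical
  refine ⟨1/6, by norm_num, fun ε hε hε6 r hr => ?_⟩
  obtain ⟨hr2, hrnn, hrzero, hrsum⟩ := hr
  set N : ℕ := Δ - 2 with hNdef
  have hN1 : 1 ≤ N := by omega
  set a : ℕ → ℝ := fun i => tailS Δ r (i + 3) with hadef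
  -- basic facts about a
  have hann : ∀ i, 0 ≤ a i := by
    intro i
    refine Finset.sum_nonneg fun d hd => ?_
    rw [Finset.mem_Icc] at hd
    exact hrnn d (by omega) hd.2
  have hale : ∀ i, a i ≤ 1 := by
    intro i
    rw [← hrsum]
    refine Finset.sum_le_sum_of_subset_of_nonneg ?_ fun d hd _ => ?_
    · exact Finset.Icc_subset_Icc (by omega) le_rfl
    · rw [Finset.mem_Icc] at hd
      exact hrnn d hd.1 hd.2
  have hamono : ∀ i, a (i + 1) ≤ a i := by
    intro i
    refine Finset.sum_le_sum_of_subset_of_nonneg ?_ fun d hd _ => ?_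
    · exact Finset.Icc_subset_Icc (by omega) le_rfl
    · rw [Finset.mem_Icc] at hd
      exact hrnn d (by omega) hd.2
  have ha0 : a 0 = 1 := by
    have : a 0 = ∑ d ∈ Finset.Icc 3 Δ, r d := rfl
    rw [this, hrsum]
  -- the function and its derivatives
  have hIeq : Itilde Δ r ε = fun x => Real.exp (-x) * (1 + ε * ItildeAux.Q N a x) :=
    Itilde_eq_Q Δ r ε
  set f : ℝ → ℝ := fun x => Real.exp (-x) * (1 + ε * ItildeAux.Q N a x) with hfdef
  set D1 : ℝ → ℝ := fun x =>
    Real.exp (-x) * (ε * ItildeAux.Q' N a x - (1 + ε * ItildeAux.Q N a x)) with hD1def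
  have hexp : ∀ x : ℝ, HasDerivAt (fun y : ℝ => Real.exp (-y)) (-Real.exp (-x)) x := by
    intro x
    simpa [Function.comp_def] using ((Real.hasDerivAt_exp (-x)).comp x (hasDerivAt_neg x))
  have hfderiv : ∀ x : ℝ, HasDerivAt f (D1 x) x := by
    intro x
    have h2 : HasDerivAt (fun y => 1 + ε * ItildeAux.Q N a y) (ε * ItildeAux.Q' N a x) x :=
      ((ItildeAux.hasDerivAt_Q N a x).const_mul ε).const_add 1
    have := (hexp x).mul h2
    refine this.congr_deriv ?_
    simp [hD1def]
    ring
  have hderiv_eq : deriv f = D1 := funext fun x => (hfderiv x).deriv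
  set Q2 : ℝ → ℝ := fun x => ItildeAux.Q' (N - 1) (fun i => a (i + 1)) x with hQ2def
  set D2 : ℝ → ℝ := fun x =>
    Real.exp (-x) * (1 + ε * (ItildeAux.Q N a x - 2 * ItildeAux.Q' N a x + Q2 x)) with hD2def
  have hD1deriv : ∀ x : ℝ, HasDerivAt D1 (D2 x) x := by
    intro x
    have h2 : HasDerivAt (fun y => ε * ItildeAux.Q' N a y - (1 + ε * ItildeAux.Q N a y))
        (ε * Q2 x - ε * ItildeAux.Q' N a x) x := by
      exact ((ItildeAux.hasDerivAt_Q' N hN1 a x).const_mul ε).sub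
        (((ItildeAux.hasDerivAt_Q N a x).const_mul ε).const_add 1)
    have := (hexp x).mul h2
    refine this.congr_deriv ?_
    simp [hD2def, hD1def]
    ring
  -- derivative bound
  have hbound : ∀ x : ℝ, 0 ≤ x → D1 x ≤ -(1/2) * Real.exp (-x) := by
    intro x hx
    have hQ'le := ItildeAux.Q'_sub_Q_le_one hN1 hx ha0 hamono hann
    have hQnn := ItildeAux.Q_nonneg (N := N) hx hann
    have hεQ : ε * ItildeAux.Q' N a x ≤ ε * (ItildeAux.Q N a x + 1) :=
      mul_le_mul_of_nonneg_left hQ'le hε.le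
    have hkey : ε * ItildeAux.Q' N a x - (1 + ε * ItildeAux.Q N a x) ≤ -(1/2) := by
      nlinarith
    have hepos : (0:ℝ) < Real.exp (-x) := Real.exp_pos _
    calc D1 x ≤ Real.exp (-x) * (-(1/2)) := by
          exact mul_le_mul_of_nonneg_left hkey hepos.le
      _ = -(1/2) * Real.exp (-x) := by ring
  rw [hIeq]
  have hfc : Continuous f := by
    have : Differentiable ℝ f := fun x => (hfderiv x).differentiableAt
    exact this.continuous
  refine ⟨?_, ?_, ?_⟩
  · -- strictly decreasing
    refine strictAntiOn_of_deriv_neg (convex_Ici 0) hfc.continuousOn fun x hx => ?_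
    rw [interior_Ici] at hx
    have := hbound x (le_of_lt hx)
    have hepos : (0:ℝ) < Real.exp (-x) := Real.exp_pos _
    calc deriv f x = D1 x := by rw [hderiv_eq]
      _ ≤ -(1/2) * Real.exp (-x) := this
      _ < 0 := by nlinarith
  · -- derivative bound
    intro x hx
    rw [hderiv_eq]
    exact hbound x hx
  · -- convexity
    set M : ℝ := (1 / (2 * ε * (Δ : ℝ))) ^ ((Δ : ℝ)⁻¹) with hMdef
    have hΔpos : (0:ℝ) < (Δ : ℝ) := by positivity
    have hbase : (0:ℝ) < 1 / (2 * ε * (Δ : ℝ)) := by positivity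
    have hMΔ : M ^ Δ = 1 / (2 * ε * (Δ : ℝ)) := by
      rw [hMdef]
      exact Real.rpow_inv_natCast_pow hbase.le (by omega)
    refine convexOn_of_deriv2_nonneg (convex_Icc 0 M) hfc.continuousOn
      (fun x _ => ((hfderiv x).differentiableAt).differentiableWithinAt)
      (fun x _ => by
        rw [hderiv_eq]
        exact ((hD1deriv x).differentiableAt).differentiableWithinAt)
      fun x hx => ?_
    rw [interior_Icc] at hx
    have hx0 : 0 < x := hx.1
    have hxM : x < M := hx.2
    have hQ2eq : deriv^[2] f x = D2 x := by
      have : deriv^[2] f x = deriv (deriv f) x := rfl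
      rw [this, hderiv_eq, (hD1deriv x).deriv]
    rw [hQ2eq]
    have hQnn := ItildeAux.Q_nonneg (N := N) hx0.le hann
    have hQ2nn : 0 ≤ Q2 x := ItildeAux.Q'_nonneg hx0.le fun i => hann (i + 1)
    -- bound on Q'
    have hQ'E : ItildeAux.Q' N a x ≤ ItildeAux.E (N + 1) x :=
      ItildeAux.Q'_le_E hx0.le hann hale
    have hEbound : 2 * ε * ItildeAux.E (N + 1) x ≤ 1 := by
      rcases le_or_gt x 1 with hx1 | hx1
      · have h1 : ItildeAux.E (N + 1) x ≤ Real.exp x :=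
          Real.sum_le_exp_of_nonneg hx0.le (N + 1)
        have h2 : Real.exp x ≤ Real.exp 1 := Real.exp_le_exp.2 hx1
        have h3 : Real.exp 1 < 3 := by
          have := Real.exp_one_lt_d9
          linarith
        nlinarith
      · -- 1 < x < M
        have hM1 : (1:ℝ) < M := lt_trans hx1 hxM
        have hterm : ∀ i ∈ Finset.range (N + 1),
            x ^ i / (Nat.factorial i : ℝ) ≤ x ^ N := by
          intro i hi
          rw [Finset.mem_range] at hi
          have h1 : x ^ i ≤ x ^ N := pow_le_pow_right₀ hx1.le (by omega)
          have h2 : (1:ℝ) ≤ (Nat.factorial i : ℝ) := by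
            exact_mod_cast Nat.one_le_iff_ne_zero.2 (Nat.factorial_ne_zero i)
          have h3 : x ^ i / (Nat.factorial i : ℝ) ≤ x ^ i := by
            rw [div_le_iff₀ (by linarith)]
            nlinarith [pow_nonneg (le_of_lt (lt_trans one_pos hx1)) i]
          linarith
        have hsum : ItildeAux.E (N + 1) x ≤ (N + 1 : ℝ) * x ^ N := by
          calc ItildeAux.E (N + 1) x ≤ ∑ _i ∈ Finset.range (N + 1), x ^ N :=
              Finset.sum_le_sum hterm
            _ = (N + 1 : ℝ) * x ^ N := by
              rw [Finset.sum_const, Finset.card_range]; push_cast; ring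
        have hxN : x ^ N ≤ M ^ N := pow_le_pow_left₀ (by linarith) hxM.le N
        have hMN : M ^ N ≤ M ^ Δ := pow_le_pow_right₀ hM1.le (by omega)
        have hN1' : (N + 1 : ℝ) ≤ (Δ : ℝ) := by
          have : N + 1 ≤ Δ := by omega
          exact_mod_cast this
        have hMΔnn : (0:ℝ) ≤ M ^ Δ := by rw [hMΔ]; positivity
        have h4 : ItildeAux.E (N + 1) x ≤ (Δ : ℝ) * M ^ Δ := by
          have hxNnn : (0:ℝ) ≤ x ^ N := by positivity
          nlinarith
        have h5 : (Δ : ℝ) * M ^ Δ = 1 / (2 * ε) := by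
          rw [hMΔ, mul_one_div, div_eq_div_iff (by positivity) (by positivity)]
          ring
        rw [h5] at h4
        rw [div_eq_mul_inv] at h4
        have : 2 * ε * ItildeAux.E (N + 1) x ≤ 2 * ε * (1 * (2*ε)⁻¹) :=
          mul_le_mul_of_nonneg_left h4 (by positivity)
        calc 2 * ε * ItildeAux.E (N + 1) x ≤ 2 * ε * (1 * (2*ε)⁻¹) := this
          _ = 1 := by field_simp
    have hQ'b : 2 * ε * ItildeAux.Q' N a x ≤ 1 := by
      have := mul_le_mul_of_nonneg_left hQ'E (by positivity : (0:ℝ) ≤ 2 * ε)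
      linarith
    have hepos : (0:ℝ) < Real.exp (-x) := Real.exp_pos _
    have hinner : 0 ≤ 1 + ε * (ItildeAux.Q N a x - 2 * ItildeAux.Q' N a x + Q2 x) := by
      nlinarith
    exact mul_nonneg hepos.le hinner
end
end

section
/- Pointwise bound on H_r (Claim 'Bounds on H_r and β_r', part (a)): Fix an integer Δ ≥ 3. For every r ∈ R_Δ and every t ≥ 0 one has |H_r(t)| ≤ 2·λ'(t)·e^{−λ(t)} · Σ_{k=0}^{Δ−1} λ(t)^k/k!. -/
open Real MeasureTheory Filter

noncomputable section

namespace HerrAux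

open Filter Set Topology

/-- The polynomial `P(x) = Σ_{k=2}^{Δ-1} x^k/k! · s_{k+1}`. -/
def HBP (Δ : ℕ) (r : ℕ → ℝ) (x : ℝ) : ℝ :=
  ∑ k ∈ Finset.Icc 2 (Δ - 1), x ^ k / (Nat.factorial k : ℝ) * tailS Δ r (k + 1)

/-- The integrand `g(x) = e^x/(1+x)² · P(x)`. -/
def HBg (Δ : ℕ) (r : ℕ → ℝ) (x : ℝ) : ℝ := Real.exp x / (1 + x) ^ 2 * HBP Δ r x

/-- `F(y) = ∫_0^y g`. -/
def HBF (Δ : ℕ) (r : ℕ → ℝ) (y : ℝ) : ℝ := ∫ x in (0:ℝ)..y, HBg Δ r x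

def HBS (Δ : ℕ) (x : ℝ) : ℝ :=
  ∑ k ∈ Finset.Icc 2 (Δ - 1), x ^ (k - 2) / (Nat.factorial k : ℝ)

def HBS' (Δ : ℕ) (x : ℝ) : ℝ :=
  ∑ k ∈ Finset.Icc 2 (Δ - 1), ((k - 2 : ℕ) : ℝ) * x ^ (k - 2 - 1) / (Nat.factorial k : ℝ)

def HBE (Δ : ℕ) (x : ℝ) : ℝ := ∑ k ∈ Finset.range Δ, x ^ k / (Nat.factorial k : ℝ)

def HBQ (Δ : ℕ) (r : ℕ → ℝ) (x : ℝ) : ℝ :=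
  ∑ k ∈ Finset.range (Δ - 1), x ^ k / (Nat.factorial k : ℝ) * r (k + 2)

variable {Δ : ℕ} {r : ℕ → ℝ}

lemma tailS_nonneg (hr : memR Δ r) {m : ℕ} (hm : 3 ≤ m) : 0 ≤ tailS Δ r m :=
  Finset.sum_nonneg fun d hd =>
    hr.2.1 d (hm.trans (Finset.mem_Icc.1 hd).1) (Finset.mem_Icc.1 hd).2

lemma tailS_le_one (hr : memR Δ r) {m : ℕ} (hm : 3 ≤ m) : tailS Δ r m ≤ 1 := by
  rw [← hr.2.2.2]
  refine Finset.sum_le_sum_of_subset_of_nonneg ?_ fun i hi _ =>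
    hr.2.1 i (Finset.mem_Icc.1 hi).1 (Finset.mem_Icc.1 hi).2
  intro x hx
  rw [Finset.mem_Icc] at hx ⊢
  omega

lemma r_le_one (hr : memR Δ r) {m : ℕ} (hm : 3 ≤ m) (hmΔ : m ≤ Δ) : r m ≤ 1 := by
  rw [← hr.2.2.2]
  exact Finset.single_le_sum
    (fun i hi => hr.2.1 i (Finset.mem_Icc.1 hi).1 (Finset.mem_Icc.1 hi).2)
    (Finset.mem_Icc.2 ⟨hm, hmΔ⟩)

lemma HBP_nonneg (hr : memR Δ r) {x : ℝ} (hx : 0 ≤ x) : 0 ≤ HBP Δ r x := by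
  refine Finset.sum_nonneg fun k hk => ?_
  have hk' := Finset.mem_Icc.1 hk
  exact mul_nonneg (by positivity) (tailS_nonneg hr (by omega))

lemma HBE_nonneg {x : ℝ} (hx : 0 ≤ x) : 0 ≤ HBE Δ x :=
  Finset.sum_nonneg fun k _ => by positivity

lemma HBE_ge_one (hΔ : 3 ≤ Δ) {x : ℝ} (hx : 0 ≤ x) : 1 ≤ HBE Δ x := by
  have h := Finset.single_le_sum (f := fun k => x ^ k / (Nat.factorial k : ℝ))
    (fun k _ => by positivity) (Finset.mem_range.2 (show 0 < Δ by omega))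
  simpa [HBE] using h

lemma HBP_le_HBE (hr : memR Δ r) (hΔ : 3 ≤ Δ) {x : ℝ} (hx : 0 ≤ x) :
    HBP Δ r x ≤ HBE Δ x := by
  calc HBP Δ r x ≤ ∑ k ∈ Finset.Icc 2 (Δ - 1), x ^ k / (Nat.factorial k : ℝ) := by
        refine Finset.sum_le_sum fun k hk => ?_
        have hk' := Finset.mem_Icc.1 hk
        exact mul_le_of_le_one_right (by positivity) (tailS_le_one hr (by omega))
    _ ≤ HBE Δ x := by
        refine Finset.sum_le_sum_of_subset_of_nonneg ?_ fun k _ _ => by positivity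
        intro k hk
        rw [Finset.mem_Icc] at hk
        rw [Finset.mem_range]
        omega

lemma HBg_nonneg (hr : memR Δ r) {x : ℝ} (hx : 0 ≤ x) : 0 ≤ HBg Δ r x :=
  mul_nonneg (by positivity) (HBP_nonneg hr hx)

lemma HBP_cont : Continuous (HBP Δ r) := by
  unfold HBP
  exact continuous_finset_sum _ fun k _ =>
    ((continuous_pow k).div_const _).mul continuous_const

lemma HBg_contAt {x : ℝ} (hx : 0 ≤ x) : ContinuousAt (HBg Δ r) x := by
  have h1 : ((1:ℝ) + x) ^ 2 ≠ 0 := pow_ne_zero 2 (by linarith)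
  unfold HBg
  exact ((Real.continuous_exp.continuousAt).div
    (((continuous_const.add continuous_id).pow 2).continuousAt) h1).mul
    HBP_cont.continuousAt

lemma HBg_meas : Measurable (HBg Δ r) := by
  unfold HBg HBP
  fun_prop

lemma HBg_intble {y : ℝ} (hy : 0 ≤ y) :
    IntervalIntegrable (HBg Δ r) MeasureTheory.volume 0 y := by
  apply ContinuousOn.intervalIntegrable
  intro x hx
  rw [Set.uIcc_of_le hy] at hx
  exact (HBg_contAt hx.1).continuousWithinAt

lemma HBF_nonneg (hr : memR Δ r) {y : ℝ} (hy : 0 ≤ y) : 0 ≤ HBF Δ r y :=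
  intervalIntegral.integral_nonneg hy fun x hx => HBg_nonneg hr hx.1

lemma HBF_hasDerivAt {y : ℝ} (hy : 0 ≤ y) : HasDerivAt (HBF Δ r) (HBg Δ r y) y := by
  refine intervalIntegral.integral_hasDerivAt_right (HBg_intble hy) ?_ (HBg_contAt hy)
  exact HBg_meas.stronglyMeasurable.stronglyMeasurableAtFilter

lemma HBS_nonneg {x : ℝ} (hx : 0 ≤ x) : 0 ≤ HBS Δ x :=
  Finset.sum_nonneg fun k _ => by positivity

lemma HBS'_nonneg {x : ℝ} (hx : 0 ≤ x) : 0 ≤ HBS' Δ x :=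
  Finset.sum_nonneg fun k _ => by positivity

lemma HBS_hasDerivAt (x : ℝ) : HasDerivAt (HBS Δ) (HBS' Δ x) x := by
  unfold HBS HBS'
  exact HasDerivAt.fun_sum fun k _ => (hasDerivAt_pow (k - 2) x).div_const _

lemma expS_hasDerivAt (x : ℝ) :
    HasDerivAt (fun x => Real.exp x * HBS Δ x)
      (Real.exp x * HBS Δ x + Real.exp x * HBS' Δ x) x :=
  (Real.hasDerivAt_exp x).mul (HBS_hasDerivAt x)

lemma expS_cont : Continuous fun x : ℝ => Real.exp x * HBS Δ x + Real.exp x * HBS' Δ x := by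
  unfold HBS HBS'
  fun_prop

lemma HBg_le_expS (hr : memR Δ r) {x : ℝ} (hx : 0 ≤ x) :
    HBg Δ r x ≤ Real.exp x * HBS Δ x + Real.exp x * HBS' Δ x := by
  have h1x : (0:ℝ) < 1 + x := by linarith
  have hP : HBP Δ r x ≤ HBS Δ x * (1 + x) ^ 2 := by
    unfold HBP HBS
    rw [Finset.sum_mul]
    refine Finset.sum_le_sum fun k hk => ?_
    rw [Finset.mem_Icc] at hk
    have hxk : x ^ k ≤ x ^ (k - 2) * (1 + x) ^ 2 := by
      have h1 : x ^ k = x ^ (k - 2) * x ^ 2 := by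
        rw [← pow_add]
        congr 1
        omega
      rw [h1]
      have : x ^ 2 ≤ (1 + x) ^ 2 := by nlinarith
      exact mul_le_mul_of_nonneg_left this (by positivity)
    calc x ^ k / (Nat.factorial k : ℝ) * tailS Δ r (k + 1)
        ≤ x ^ k / (Nat.factorial k : ℝ) :=
          mul_le_of_le_one_right (by positivity) (tailS_le_one hr (by omega))
      _ ≤ x ^ (k - 2) * (1 + x) ^ 2 / (Nat.factorial k : ℝ) := by gcongr
      _ = x ^ (k - 2) / (Nat.factorial k : ℝ) * (1 + x) ^ 2 := by ring
  have h2 : HBg Δ r x ≤ Real.exp x * HBS Δ x := by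
    unfold HBg
    rw [div_mul_eq_mul_div, div_le_iff₀ (by positivity)]
    have h4 := mul_le_mul_of_nonneg_left hP (le_of_lt (Real.exp_pos x))
    rw [← mul_assoc] at h4
    exact h4
  have h3 : 0 ≤ Real.exp x * HBS' Δ x :=
    mul_nonneg (le_of_lt (Real.exp_pos x)) (HBS'_nonneg hx)
  linarith

lemma HBF_le_expS (hr : memR Δ r) {y : ℝ} (hy : 0 ≤ y) :
    HBF Δ r y ≤ Real.exp y * HBS Δ y := by
  have hint : ∫ x in (0:ℝ)..y, (Real.exp x * HBS Δ x + Real.exp x * HBS' Δ x) =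
      Real.exp y * HBS Δ y - Real.exp 0 * HBS Δ 0 :=
    intervalIntegral.integral_eq_sub_of_hasDerivAt (fun x _ => expS_hasDerivAt x)
      (expS_cont.intervalIntegrable 0 y)
  have hmono : HBF Δ r y ≤ ∫ x in (0:ℝ)..y,
      (Real.exp x * HBS Δ x + Real.exp x * HBS' Δ x) := by
    refine intervalIntegral.integral_mono_on hy (HBg_intble hy)
      (expS_cont.intervalIntegrable 0 y) fun x hx => HBg_le_expS hr hx.1
  have hS0 : 0 ≤ HBS Δ 0 := HBS_nonneg le_rfl
  rw [hint, Real.exp_zero, one_mul] at hmono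
  linarith

lemma sum_Icc2 (f : ℕ → ℝ) (hΔ : 3 ≤ Δ) :
    ∑ k ∈ Finset.Icc 2 (Δ - 1), f k = ∑ i ∈ Finset.range (Δ - 2), f (2 + i) := by
  rw [← Finset.Ico_add_one_right_eq_Icc, Finset.sum_Ico_eq_sum_range]
  congr 1

lemma key_poly (hΔ : 3 ≤ Δ) {y : ℝ} (hy : 0 ≤ y) :
    (1 + 2 * y) * HBS Δ y ≤ 2 * HBE Δ y - 1 := by
  have fact2 : ∀ i : ℕ, (2:ℝ) * (Nat.factorial i : ℝ) ≤ (Nat.factorial (2 + i) : ℝ) := by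
    intro i
    have h : 2 * Nat.factorial i ≤ Nat.factorial (2 + i) := by
      have h2 : 2 + i = i + 2 := by omega
      rw [h2, Nat.factorial_succ, Nat.factorial_succ, ← mul_assoc]
      exact Nat.mul_le_mul_right _ (by nlinarith)
    exact_mod_cast h
  -- part 1 : HBS ≤ (1/2) E
  have h1 : HBS Δ y ≤ (1/2) * HBE Δ y := by
    have e1 : HBS Δ y = ∑ i ∈ Finset.range (Δ - 2), y ^ i / (Nat.factorial (2 + i) : ℝ) := by
      unfold HBS
      rw [sum_Icc2 _ hΔ]
      refine Finset.sum_congr rfl fun i _ => ?_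
      congr 2
      omega
    rw [e1]
    have e2 : ∑ i ∈ Finset.range (Δ - 2), y ^ i / (Nat.factorial (2 + i) : ℝ)
        ≤ ∑ i ∈ Finset.range (Δ - 2), (1/2) * (y ^ i / (Nat.factorial i : ℝ)) := by
      refine Finset.sum_le_sum fun i _ => ?_
      have hfi : (0:ℝ) < (Nat.factorial i : ℝ) := by
        exact_mod_cast Nat.factorial_pos i
      calc y ^ i / (Nat.factorial (2 + i) : ℝ)
          ≤ y ^ i / (2 * (Nat.factorial i : ℝ)) := by
            apply div_le_div_of_nonneg_left (by positivity) (by positivity) (fact2 i)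
        _ = (1/2) * (y ^ i / (Nat.factorial i : ℝ)) := by ring
    refine e2.trans ?_
    rw [← Finset.mul_sum]
    have : ∑ i ∈ Finset.range (Δ - 2), y ^ i / (Nat.factorial i : ℝ) ≤ HBE Δ y := by
      refine Finset.sum_le_sum_of_subset_of_nonneg
        (Finset.range_subset_range.2 (by omega)) fun i _ _ => by positivity
    linarith
  -- part 2 : 2 y HBS ≤ E - 1
  have h2 : 2 * y * HBS Δ y ≤ HBE Δ y - 1 := by
    have e1 : 2 * y * HBS Δ y
        = ∑ k ∈ Finset.Icc 2 (Δ - 1), 2 * (y ^ (k - 2 + 1) / (Nat.factorial k : ℝ)) := by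
      unfold HBS
      rw [Finset.mul_sum]
      refine Finset.sum_congr rfl fun k hk => ?_
      rw [pow_succ]
      ring
    have e2 : ∑ k ∈ Finset.Icc 2 (Δ - 1), 2 * (y ^ (k - 2 + 1) / (Nat.factorial k : ℝ))
        ≤ ∑ k ∈ Finset.Icc 2 (Δ - 1), y ^ (k - 2 + 1) / (Nat.factorial (k - 1) : ℝ) := by
      refine Finset.sum_le_sum fun k hk => ?_
      rw [Finset.mem_Icc] at hk
      have hfact : (2:ℝ) * (Nat.factorial (k - 1) : ℝ) ≤ (Nat.factorial k : ℝ) := by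
        have h : 2 * Nat.factorial (k - 1) ≤ Nat.factorial k := by
          have h2 : k = (k - 1) + 1 := by omega
          rw [h2, Nat.factorial_succ]
          exact Nat.mul_le_mul_right _ (by omega)
        exact_mod_cast h
      have hf1 : (0:ℝ) < (Nat.factorial (k - 1) : ℝ) := by
        exact_mod_cast Nat.factorial_pos (k - 1)
      rw [mul_div_assoc'] -- 2 * a / b form? safer: direct
      rw [div_le_div_iff₀ (by positivity) (by positivity)]
      have hyp : (0:ℝ) ≤ y ^ (k - 2 + 1) := by positivity
      nlinarith
    have e3 : ∑ k ∈ Finset.Icc 2 (Δ - 1), y ^ (k - 2 + 1) / (Nat.factorial (k - 1) : ℝ)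
        = ∑ i ∈ Finset.range (Δ - 2), y ^ (i + 1) / (Nat.factorial (i + 1) : ℝ) := by
      rw [sum_Icc2 _ hΔ]
      refine Finset.sum_congr rfl fun i _ => ?_
      have h1 : 2 + i - 2 + 1 = i + 1 := by omega
      have h2 : 2 + i - 1 = i + 1 := by omega
      rw [h1, h2]
    have e4 : ∑ i ∈ Finset.range (Δ - 2), y ^ (i + 1) / (Nat.factorial (i + 1) : ℝ)
        ≤ ∑ i ∈ Finset.range (Δ - 1), y ^ (i + 1) / (Nat.factorial (i + 1) : ℝ) := by
      refine Finset.sum_le_sum_of_subset_of_nonneg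
        (Finset.range_subset_range.2 (by omega)) fun i _ _ => by positivity
    have e5 : HBE Δ y = (∑ i ∈ Finset.range (Δ - 1),
        y ^ (i + 1) / (Nat.factorial (i + 1) : ℝ)) + 1 := by
      unfold HBE
      rw [show Δ = (Δ - 1) + 1 by omega, Finset.sum_range_succ']
      simp
    rw [e1]
    rw [e5]
    linarith [e2, e3.le, e4, e3.ge]
  have hE : 0 ≤ HBE Δ y := HBE_nonneg hy
  nlinarith [HBS_nonneg (Δ := Δ) hy]

lemma HBQ_lower (hr : memR Δ r) (hΔ : 3 ≤ Δ) {y : ℝ} (hy : 0 ≤ y) :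
    -1 ≤ HBQ Δ r y := by
  unfold HBQ
  rw [show Δ - 1 = (Δ - 2) + 1 by omega, Finset.sum_range_succ']
  have h1 : 0 ≤ ∑ i ∈ Finset.range (Δ - 2),
      y ^ (i + 1) / (Nat.factorial (i + 1) : ℝ) * r (i + 1 + 2) := by
    refine Finset.sum_nonneg fun i hi => ?_
    rw [Finset.mem_range] at hi
    exact mul_nonneg (by positivity) (hr.2.1 (i + 1 + 2) (by omega) (by omega))
  have h2 : y ^ 0 / (Nat.factorial 0 : ℝ) * r (0 + 2) = -1 := by
    simp [hr.1]
  rw [h2]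
  linarith

lemma HBQ_upper (hr : memR Δ r) (hΔ : 3 ≤ Δ) {y : ℝ} (hy : 0 ≤ y) :
    HBQ Δ r y ≤ HBE Δ y := by
  calc HBQ Δ r y ≤ ∑ k ∈ Finset.range (Δ - 1), y ^ k / (Nat.factorial k : ℝ) := by
        refine Finset.sum_le_sum fun k hk => ?_
        rw [Finset.mem_range] at hk
        refine mul_le_of_le_one_right (by positivity) ?_
        rcases Nat.eq_zero_or_pos k with h | h
        · rw [h]
          show r 2 ≤ 1
          rw [hr.1]
          norm_num
        · exact r_le_one hr (by omega) (by omega)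
    _ ≤ HBE Δ y := Finset.sum_le_sum_of_subset_of_nonneg
        (Finset.range_subset_range.2 (by omega)) fun k _ _ => by positivity

lemma bracket_bound (hΔ : 3 ≤ Δ) (hr : memR Δ r) {y : ℝ} (hy : 0 ≤ y) :
    |HBQ Δ r y + Real.exp (-y) * (1 + y) * HBg Δ r y
      - Real.exp (-y) * (1 + 2 * y) * HBF Δ r y| ≤ 2 * HBE Δ y := by
  have h1y : (0:ℝ) < 1 + y := by linarith
  have hA : Real.exp (-y) * (1 + y) * HBg Δ r y = HBP Δ r y / (1 + y) := by
    unfold HBg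
    rw [Real.exp_neg]
    field_simp
  have hA1 : 0 ≤ HBP Δ r y / (1 + y) := div_nonneg (HBP_nonneg hr hy) h1y.le
  have hA2 : HBP Δ r y / (1 + y) ≤ HBE Δ y :=
    (div_le_self (HBP_nonneg hr hy) (by linarith)).trans (HBP_le_HBE hr hΔ hy)
  have hB0 : 0 ≤ Real.exp (-y) * (1 + 2 * y) * HBF Δ r y :=
    mul_nonneg (by positivity) (HBF_nonneg hr hy)
  have hB : Real.exp (-y) * (1 + 2 * y) * HBF Δ r y ≤ 2 * HBE Δ y - 1 := by
    calc Real.exp (-y) * (1 + 2 * y) * HBF Δ r y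
        ≤ Real.exp (-y) * (1 + 2 * y) * (Real.exp y * HBS Δ y) :=
          mul_le_mul_of_nonneg_left (HBF_le_expS hr hy) (by positivity)
      _ = (1 + 2 * y) * HBS Δ y := by
          rw [Real.exp_neg]
          field_simp
      _ ≤ 2 * HBE Δ y - 1 := key_poly hΔ hy
  have hQl := HBQ_lower hr hΔ hy
  have hQu := HBQ_upper hr hΔ hy
  rw [hA, abs_le]
  constructor <;> linarith

lemma lam_nonneg (lam : ℝ → ℝ) (hdiff : Differentiable ℝ lam) (h0 : lam 0 = 0)
    (hode : ∀ t : ℝ, 0 ≤ t → deriv lam t = Real.exp (-lam t) * (1 + lam t)) :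
    ∀ t : ℝ, 0 ≤ t → 0 ≤ lam t := by
  intro t ht
  by_contra hneg
  push_neg at hneg
  have ht0 : 0 < t := by
    rcases eq_or_lt_of_le ht with h | h
    · rw [← h, h0] at hneg; linarith
    · exact h
  set K := {s : ℝ | s ∈ Set.Icc 0 t ∧ 0 ≤ lam s} with hK
  have hKc : IsClosed K := by
    have : K = Set.Icc 0 t ∩ lam ⁻¹' Set.Ici 0 := by
      ext s; simp [hK, Set.mem_Icc]
    rw [this]
    exact isClosed_Icc.inter (isClosed_Ici.preimage hdiff.continuous)
  have hKne : K.Nonempty := ⟨0, ⟨⟨le_refl 0, ht⟩, by rw [h0]⟩⟩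
  have hKcp : IsCompact K := isCompact_Icc.of_isClosed_subset hKc fun s hs => hs.1
  set c := sSup K with hc
  have hcK : c ∈ K := hKcp.sSup_mem hKne
  have hct : c ≤ t := hcK.1.2
  have hclt : c < t := lt_of_le_of_ne hct fun h => by
    have := hcK.2
    rw [h] at this
    linarith
  have hc0 : 0 ≤ c := hcK.1.1
  have hev : ∀ᶠ s in 𝓝[>] c, 0 < lam s := by
    rcases eq_or_lt_of_le hcK.2 with hzero | hpos
    · -- lam c = 0, derivative is 1
      have hd : HasDerivAt lam 1 c := by
        have h1 := (hdiff c).hasDerivAt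
        have h2 : deriv lam c = 1 := by
          rw [hode c hc0, ← hzero]
          norm_num
        rwa [h2] at h1
      rw [hasDerivAt_iff_tendsto_slope] at hd
      have h2 : Tendsto (slope lam c) (𝓝[>] c) (𝓝 1) :=
        hd.mono_left (nhdsWithin_mono c fun x hx => ne_of_gt hx)
      have h3 : ∀ᶠ s in 𝓝[>] c, 0 < slope lam c s :=
        h2.eventually (eventually_gt_nhds one_pos)
      filter_upwards [h3, self_mem_nhdsWithin] with s hs hs'
      have hsc : (0:ℝ) < s - c := by
        simp only [Set.mem_Ioi] at hs'
        linarith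
      have := hs
      rw [slope_def_field, div_pos_iff] at this
      rcases this with ⟨h4, _⟩ | ⟨_, h5⟩
      · linarith [h4]
      · linarith
    · have h4 : ∀ᶠ s in 𝓝 c, 0 < lam s :=
        (hdiff.continuous.tendsto c).eventually (eventually_gt_nhds hpos)
      exact h4.filter_mono nhdsWithin_le_nhds
  have hev2 : Set.Ioo c t ∈ 𝓝[>] c := Ioo_mem_nhdsGT hclt
  obtain ⟨s, hs1, hs2⟩ := (hev.and hev2).exists
  have hsK : s ∈ K := ⟨⟨hc0.trans hs2.1.le, hs2.2.le⟩, hs1.le⟩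
  have := le_csSup hKcp.bddAbove hsK
  have : c < s := hs2.1
  linarith [le_csSup hKcp.bddAbove hsK]

section Deriv

variable (lam : ℝ → ℝ)

lemma LamErr_eq (Δ : ℕ) (r : ℕ → ℝ) (t : ℝ) :
    LamErr lam Δ r t = deriv lam t * HBF Δ r (lam t) := rfl

lemma HBP_zero : HBP Δ r 0 = 0 := by
  unfold HBP
  refine Finset.sum_eq_zero fun k hk => ?_
  have hk' := Finset.mem_Icc.1 hk
  rw [zero_pow (by omega : k ≠ 0)]
  simp

lemma HBg_zero : HBg Δ r 0 = 0 := by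
  unfold HBg
  rw [HBP_zero, mul_zero]

lemma HBF_zero : HBF Δ r 0 = 0 := by
  unfold HBF
  exact intervalIntegral.integral_same

variable (hdiff : Differentiable ℝ lam) (h0 : lam 0 = 0)
  (hode : ∀ t : ℝ, 0 ≤ t → deriv lam t = Real.exp (-lam t) * (1 + lam t))

include hdiff h0 hode in
lemma Phi_hasDerivAt {t : ℝ} (ht : 0 ≤ t) :
    HasDerivAt (fun s => HBF Δ r (lam s)) (HBg Δ r (lam t) * deriv lam t) t :=
  (HBF_hasDerivAt (lam_nonneg lam hdiff h0 hode t ht)).comp t (hdiff t).hasDerivAt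

include hdiff h0 hode in
lemma deriv_LamErr {t : ℝ} (ht : 0 ≤ t) :
    deriv (LamErr lam Δ r) t =
      -(lam t) * deriv lam t * Real.exp (-lam t) * HBF Δ r (lam t)
        + (deriv lam t) ^ 2 * HBg Δ r (lam t) := by
  rcases eq_or_lt_of_le ht with ht0 | htpos
  · -- t = 0
    subst ht0
    have hRHS : -(lam 0) * deriv lam 0 * Real.exp (-lam 0) * HBF Δ r (lam 0)
        + (deriv lam 0) ^ 2 * HBg Δ r (lam 0) = 0 := by
      rw [h0, HBg_zero]
      ring
    rw [hRHS]
    have hΦ : HasDerivAt (fun s => HBF Δ r (lam s)) 0 0 := by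
      have h := Phi_hasDerivAt lam hdiff h0 hode le_rfl (Δ := Δ) (r := r)
      rwa [h0, HBg_zero, zero_mul] at h
    have hslopeΦ : Tendsto (slope (fun s => HBF Δ r (lam s)) 0) (𝓝[>] (0:ℝ)) (𝓝 0) :=
      (hasDerivAt_iff_tendsto_slope.1 hΦ).mono_left
        (nhdsWithin_mono 0 fun x hx => ne_of_gt hx)
    have hLtends : Tendsto (fun s => deriv lam s) (𝓝[>] (0:ℝ)) (𝓝 1) := by
      have hc : Continuous fun s => Real.exp (-lam s) * (1 + lam s) :=
        ((hdiff.continuous.neg).rexp).mul (continuous_const.add hdiff.continuous)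
      have h2 := hc.tendsto 0
      rw [h0] at h2
      norm_num at h2
      refine (h2.mono_left nhdsWithin_le_nhds).congr' ?_
      filter_upwards [self_mem_nhdsWithin] with s hs
      exact (hode s (le_of_lt hs)).symm
    have hprod : Tendsto (fun s => deriv lam s * slope (fun u => HBF Δ r (lam u)) 0 s)
        (𝓝[>] (0:ℝ)) (𝓝 0) := by
      have h3 := hLtends.mul hslopeΦ
      simpa using h3
    have hslope_eq : (fun s => deriv lam s * slope (fun u => HBF Δ r (lam u)) 0 s)
        =ᶠ[𝓝[>] (0:ℝ)] slope (LamErr lam Δ r) 0 := by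
      filter_upwards [self_mem_nhdsWithin] with s hs
      simp only [Set.mem_Ioi] at hs
      rw [slope_def_field, slope_def_field, LamErr_eq lam Δ r s, LamErr_eq lam Δ r 0,
        h0, HBF_zero, mul_zero]
      ring
    have hLamslope : Tendsto (slope (LamErr lam Δ r) 0) (𝓝[>] (0:ℝ)) (𝓝 0) :=
      hprod.congr' hslope_eq
    by_cases hdLE : DifferentiableAt ℝ (LamErr lam Δ r) 0
    · have hD := hasDerivAt_iff_tendsto_slope.1 hdLE.hasDerivAt
      have hD' : Tendsto (slope (LamErr lam Δ r) 0) (𝓝[>] (0:ℝ))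
          (𝓝 (deriv (LamErr lam Δ r) 0)) :=
        hD.mono_left (nhdsWithin_mono 0 fun x hx => ne_of_gt hx)
      exact tendsto_nhds_unique hD' hLamslope
    · rw [deriv_zero_of_not_differentiableAt hdLE]
  · -- t > 0
    have hmem : Set.Ioi (0:ℝ) ∈ 𝓝 t := Ioi_mem_nhds htpos
    have heq : LamErr lam Δ r =ᶠ[𝓝 t]
        fun s => Real.exp (-lam s) * (1 + lam s) * HBF Δ r (lam s) := by
      filter_upwards [hmem] with s hs
      rw [LamErr_eq, hode s (le_of_lt hs)]
    have hΦ := Phi_hasDerivAt lam hdiff h0 hode ht (Δ := Δ) (r := r)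
    have h1 : HasDerivAt (fun s => Real.exp (-lam s) * (1 + lam s) * HBF Δ r (lam s))
        ((Real.exp (-lam t) * (-deriv lam t) * (1 + lam t)
          + Real.exp (-lam t) * (0 + deriv lam t)) * HBF Δ r (lam t)
          + Real.exp (-lam t) * (1 + lam t) * (HBg Δ r (lam t) * deriv lam t)) t := by
      exact (((hdiff t).hasDerivAt.neg.exp).mul
        ((hasDerivAt_const t (1:ℝ)).add (hdiff t).hasDerivAt)).mul hΦ
    rw [heq.deriv_eq, h1.deriv, hode t ht]
    ring

end Deriv

end HerrAux


/-- Pointwise bound on `H_r`: `|H_r(t)| ≤ 2 λ'(t) e^{-λ(t)} Σ_{k=0}^{Δ-1} λ(t)^k/k!`. -/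
theorem Herr_pointwise_bound (Δ : ℕ) (hΔ : 3 ≤ Δ) (lam : ℝ → ℝ)
    (hdiff : Differentiable ℝ lam) (h0 : lam 0 = 0)
    (hode : ∀ t : ℝ, 0 ≤ t → deriv lam t = Real.exp (-lam t) * (1 + lam t))
    (r : ℕ → ℝ) (hr : memR Δ r) :
    ∀ t : ℝ, 0 ≤ t →
      |Herr lam Δ r t| ≤ 2 * deriv lam t * Real.exp (-lam t) *
        ∑ k ∈ Finset.range Δ, lam t ^ k / (Nat.factorial k : ℝ) := by
  intro t ht
  have hy : 0 ≤ lam t := HerrAux.lam_nonneg lam hdiff h0 hode t ht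
  have hL : deriv lam t = Real.exp (-lam t) * (1 + lam t) := hode t ht
  have hLpos : 0 < deriv lam t := by rw [hL]; positivity
  have hD := HerrAux.deriv_LamErr lam hdiff h0 hode ht (Δ := Δ) (r := r)
  have hbr := HerrAux.bracket_bound hΔ hr hy (y := lam t)
  have hH : Herr lam Δ r t = deriv lam t * Real.exp (-lam t) *
      (HerrAux.HBQ Δ r (lam t)
        + Real.exp (-lam t) * (1 + lam t) * HerrAux.HBg Δ r (lam t)
        - Real.exp (-lam t) * (1 + 2 * lam t) * HerrAux.HBF Δ r (lam t)) := by
    show Real.exp (-lam t) * (deriv (LamErr lam Δ r) t - deriv lam t * LamErr lam Δ r t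
      + deriv lam t * HerrAux.HBQ Δ r (lam t)) = _
    rw [hD, HerrAux.LamErr_eq, hL]
    ring
  have hE : (∑ k ∈ Finset.range Δ, lam t ^ k / (Nat.factorial k : ℝ))
      = HerrAux.HBE Δ (lam t) := rfl
  rw [hH, abs_mul, abs_of_pos (show 0 < deriv lam t * Real.exp (-lam t) by positivity), hE]
  calc deriv lam t * Real.exp (-lam t) * |_|
      ≤ deriv lam t * Real.exp (-lam t) * (2 * HerrAux.HBE Δ (lam t)) :=
        mul_le_mul_of_nonneg_left hbr (by positivity)
    _ = 2 * deriv lam t * Real.exp (-lam t) * HerrAux.HBE Δ (lam t) := by ring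
end
end

section
/- Bound and limit for β_r (Claim 'Bounds on H_r and β_r', parts (b) and (c)): Fix an integer Δ ≥ 3. For every r ∈ R_Δ and every t ≥ 0 one has |β_r(t)| ≤ 2·Δ²·(Δ+1); moreover β_r(t) converges to Υ_r as t → ∞, uniformly in r ∈ R_Δ: for every η > 0 there exists T > 0 such that |β_r(t) − Υ_r| ≤ η for all t ≥ T and all r ∈ R_Δ. -/
open Real MeasureTheory Filter

noncomputable section

def ppoly (Δ : ℕ) (r : ℕ → ℝ) (x : ℝ) : ℝ :=
  ∑ k ∈ Finset.Icc 2 (Δ - 1), x ^ k / (Nat.factorial k : ℝ) * tailS Δ r (k + 1)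

def qpoly (Δ : ℕ) (r : ℕ → ℝ) (x : ℝ) : ℝ :=
  ∑ k ∈ Finset.range (Δ - 1), x ^ k / (Nat.factorial k : ℝ) * r (k + 2)

def Ffun (Δ : ℕ) (r : ℕ → ℝ) (y : ℝ) : ℝ :=
  ∫ x in (0:ℝ)..y, Real.exp x / (1 + x) ^ 2 * ppoly Δ r x

def cfun (y : ℝ) : ℝ := Real.exp (-y) ^ 2 * (y ^ 3 + 2 * y ^ 2 + 2 * y + 1)

def Gfun (Δ : ℕ) (r : ℕ → ℝ) (y : ℝ) : ℝ :=
  (∫ x in (0:ℝ)..y, Real.exp (-x) * (x ^ 2 * qpoly Δ r x - ppoly Δ r x)) + cfun y * Ffun Δ r y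

def Gd (Δ : ℕ) (r : ℕ → ℝ) (y : ℝ) : ℝ :=
  Real.exp (-y) * y ^ 2 * qpoly Δ r y + Real.exp (-y) * y ^ 2 / (1 + y) * ppoly Δ r y
    - Real.exp (-y) ^ 2 * (1 + 2 * y) * y ^ 2 * Ffun Δ r y

variable {Δ : ℕ} {r : ℕ → ℝ}

lemma ppoly_cont : Continuous (ppoly Δ r) := by
  unfold ppoly
  exact continuous_finset_sum _ fun k _ => by fun_prop

lemma qpoly_cont : Continuous (qpoly Δ r) := by
  unfold qpoly
  exact continuous_finset_sum _ fun k _ => by fun_prop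

lemma gContAt {x : ℝ} (hx : (0:ℝ) ≤ x) :
    ContinuousAt (fun x => Real.exp x / (1 + x) ^ 2 * ppoly Δ r x) x := by
  have h1 : ((1 : ℝ) + x) ^ 2 ≠ 0 := by positivity
  exact ((Real.continuous_exp.continuousAt).div
    (((continuous_const.add continuous_id).pow 2).continuousAt) h1).mul ppoly_cont.continuousAt

lemma g_intable {y : ℝ} (hy : (0:ℝ) ≤ y) :
    IntervalIntegrable (fun x => Real.exp x / (1 + x) ^ 2 * ppoly Δ r x) volume 0 y := by
  apply ContinuousOn.intervalIntegrable
  intro x hx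
  rw [Set.uIcc_of_le hy] at hx
  exact (gContAt hx.1).continuousWithinAt

lemma Ffun_hasDeriv {y : ℝ} (hy : (0:ℝ) ≤ y) :
    HasDerivAt (Ffun Δ r) (Real.exp y / (1 + y) ^ 2 * ppoly Δ r y) y := by
  apply intervalIntegral.integral_hasDerivAt_right (g_intable hy)
  · have hm : Measurable (fun x => Real.exp x / (1 + x) ^ 2 * ppoly Δ r x) := by
      apply Measurable.mul _ ppoly_cont.measurable
      exact Real.measurable_exp.div (by fun_prop)
    exact hm.stronglyMeasurable.stronglyMeasurableAtFilter
  · exact gContAt hy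

lemma exp_neg_hasDeriv (y : ℝ) : HasDerivAt (fun y : ℝ => Real.exp (-y)) (-Real.exp (-y)) y := by
  simpa using ((hasDerivAt_id y).neg).exp

lemma cfun_hasDeriv (y : ℝ) :
    HasDerivAt cfun (-(Real.exp (-y) ^ 2 * (1 + 2 * y) * y ^ 2)) y := by
  have h1 := (exp_neg_hasDeriv y).pow 2
  have hp : HasDerivAt (fun y : ℝ => y ^ 3 + 2 * y ^ 2 + 2 * y + 1)
      (3 * y ^ 2 + 4 * y + 2) y := by
    have := (((hasDerivAt_pow 3 y).add ((hasDerivAt_pow 2 y).const_mul 2)).add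
      ((hasDerivAt_id y).const_mul 2)).add_const 1
    exact this.congr_deriv (by ring)
  have := h1.mul hp
  exact this.congr_deriv (by simp only [Pi.pow_apply]; ring)

lemma G_hasDeriv {y : ℝ} (hy : (0:ℝ) ≤ y) : HasDerivAt (Gfun Δ r) (Gd Δ r y) y := by
  have hcont : Continuous (fun x => Real.exp (-x) * (x ^ 2 * qpoly Δ r x - ppoly Δ r x)) := by
    have := ppoly_cont (Δ := Δ) (r := r)
    have := qpoly_cont (Δ := Δ) (r := r)
    fun_prop
  have h_int : HasDerivAt (fun y => ∫ x in (0:ℝ)..y, Real.exp (-x) * (x ^ 2 * qpoly Δ r x - ppoly Δ r x))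
      (Real.exp (-y) * (y ^ 2 * qpoly Δ r y - ppoly Δ r y)) y := by
    apply intervalIntegral.integral_hasDerivAt_right (hcont.intervalIntegrable _ _)
      hcont.measurable.stronglyMeasurable.stronglyMeasurableAtFilter hcont.continuousAt
  have h2 := (cfun_hasDeriv y).mul (Ffun_hasDeriv (Δ := Δ) (r := r) hy)
  have hsum := h_int.add h2
  have h1y : (1 : ℝ) + y ≠ 0 := by positivity
  refine hsum.congr_deriv ?_
  symm
  unfold Gd cfun
  rw [Real.exp_neg]
  field_simp
  ring

-- monomial integral facts
def Sm (m : ℕ) (y : ℝ) : ℝ :=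
  ∑ j ∈ Finset.range (m + 1), ((m.factorial : ℝ) / (j.factorial : ℝ)) * y ^ j

lemma Sm_hasDeriv (m : ℕ) (y : ℝ) : HasDerivAt (Sm m) (Sm m y - y ^ m) y := by
  have h : HasDerivAt (Sm m)
      (∑ j ∈ Finset.range (m + 1), ((m.factorial : ℝ) / (j.factorial : ℝ)) * (j * y ^ (j - 1))) y := by
    apply HasDerivAt.fun_sum
    intro j _
    exact (hasDerivAt_pow j y).const_mul _
  convert h using 1
  rw [Finset.sum_range_succ' _ m]
  have hz : ((m.factorial : ℝ) / (Nat.factorial 0 : ℝ)) * ((0:ℕ) * y ^ (0 - 1)) = 0 := by simp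
  rw [hz, add_zero]
  have hSm : Sm m y - y ^ m = ∑ j ∈ Finset.range m, ((m.factorial : ℝ) / (j.factorial : ℝ)) * y ^ j := by
    unfold Sm
    rw [Finset.sum_range_succ]
    have hm : ((m.factorial : ℝ) / (m.factorial : ℝ)) = 1 :=
      div_self (Nat.cast_ne_zero.2 m.factorial_ne_zero)
    rw [hm, one_mul, add_sub_cancel_right]
  rw [hSm]
  apply Finset.sum_congr rfl
  intro i _
  rw [Nat.add_sub_cancel]
  push_cast
  have : (Nat.factorial (i + 1) : ℝ) = (i + 1) * (Nat.factorial i : ℝ) := by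
    rw [Nat.factorial_succ]; push_cast; ring
  rw [this]
  have hi : (Nat.factorial i : ℝ) ≠ 0 := Nat.cast_ne_zero.2 i.factorial_ne_zero
  have hi1 : ((i : ℝ) + 1) ≠ 0 := by positivity
  field_simp

lemma intA_eq (m : ℕ) (y : ℝ) :
    ∫ x in (0:ℝ)..y, Real.exp (-x) * x ^ m = (m.factorial : ℝ) - Real.exp (-y) * Sm m y := by
  have hd : ∀ x ∈ Set.uIcc (0:ℝ) y, HasDerivAt (fun x => -(Real.exp (-x) * Sm m x))
      (Real.exp (-x) * x ^ m) x := by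
    intro x _
    have h := ((exp_neg_hasDeriv x).mul (Sm_hasDeriv m x)).neg
    exact h.congr_deriv (by ring)
  rw [intervalIntegral.integral_eq_sub_of_hasDerivAt hd
    (Continuous.intervalIntegrable (by fun_prop) _ _)]
  have h0 : Sm m 0 = (m.factorial : ℝ) := by
    unfold Sm
    rw [Finset.sum_eq_single 0]
    · simp
    · intro b _ hb; simp [zero_pow hb]
    · simp
  simp [h0]
  ring

lemma Sm_nonneg {m : ℕ} {y : ℝ} (hy : 0 ≤ y) : 0 ≤ Sm m y := by
  apply Finset.sum_nonneg
  intro j _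
  have : (0:ℝ) ≤ (m.factorial : ℝ) := by positivity
  positivity

lemma Sm_le {m : ℕ} {y : ℝ} (hy : 0 ≤ y) :
    Sm m y ≤ ((m : ℝ) + 1) * (m.factorial : ℝ) * (1 + y) ^ m := by
  have h : ∀ j ∈ Finset.range (m + 1),
      ((m.factorial : ℝ) / (j.factorial : ℝ)) * y ^ j ≤ (m.factorial : ℝ) * (1 + y) ^ m := by
    intro j hj
    rw [Finset.mem_range] at hj
    have hj' : j ≤ m := Nat.lt_succ_iff.1 hj
    have h1 : ((m.factorial : ℝ) / (j.factorial : ℝ)) ≤ (m.factorial : ℝ) := by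
      apply div_le_self (by positivity)
      exact_mod_cast j.factorial_pos
    have h2 : y ^ j ≤ (1 + y) ^ m := by
      calc y ^ j ≤ (1 + y) ^ j := pow_le_pow_left₀ hy (by linarith) j
        _ ≤ (1 + y) ^ m := pow_le_pow_right₀ (by linarith) hj'
    have hyj : (0:ℝ) ≤ y ^ j := by positivity
    calc ((m.factorial : ℝ) / (j.factorial : ℝ)) * y ^ j
        ≤ (m.factorial : ℝ) * y ^ j := by
          apply mul_le_mul_of_nonneg_right h1 hyj
      _ ≤ (m.factorial : ℝ) * (1 + y) ^ m := by
          apply mul_le_mul_of_nonneg_left h2 (by positivity)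
  calc Sm m y ≤ ∑ _j ∈ Finset.range (m + 1), (m.factorial : ℝ) * (1 + y) ^ m :=
        Finset.sum_le_sum h
    _ = ((m : ℝ) + 1) * (m.factorial : ℝ) * (1 + y) ^ m := by
        rw [Finset.sum_const, Finset.card_range]
        push_cast
        ring

lemma intA_nonneg {m : ℕ} {y : ℝ} (hy : 0 ≤ y) :
    0 ≤ ∫ x in (0:ℝ)..y, Real.exp (-x) * x ^ m := by
  apply intervalIntegral.integral_nonneg hy
  intro x hx
  have := hx.1
  positivity

lemma intA_le {m : ℕ} {y : ℝ} (hy : 0 ≤ y) :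
    ∫ x in (0:ℝ)..y, Real.exp (-x) * x ^ m ≤ (m.factorial : ℝ) := by
  rw [intA_eq]
  have h1 := Sm_nonneg (m := m) hy
  have h2 := Real.exp_pos (-y)
  nlinarith

lemma intA_err {m : ℕ} {y : ℝ} (hy : 0 ≤ y) :
    |(∫ x in (0:ℝ)..y, Real.exp (-x) * x ^ m) - (m.factorial : ℝ)| ≤
      Real.exp (-y) * (((m : ℝ) + 1) * (m.factorial : ℝ) * (1 + y) ^ m) := by
  rw [intA_eq]
  rw [sub_sub_cancel_left, abs_neg,
    abs_of_nonneg (mul_nonneg (Real.exp_pos _).le (Sm_nonneg hy))]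
  exact mul_le_mul_of_nonneg_left (Sm_le hy) (Real.exp_pos _).le


lemma r_nonneg (hr : memR Δ r) {j : ℕ} (h3 : 3 ≤ j) (hj : j ≤ Δ) : 0 ≤ r j :=
  hr.2.1 j h3 hj

lemma r_le_one (hr : memR Δ r) {j : ℕ} (h3 : 3 ≤ j) (hj : j ≤ Δ) : r j ≤ 1 := by
  have h := Finset.single_le_sum (f := r) (fun i hi => by
    rw [Finset.mem_Icc] at hi; exact hr.2.1 i hi.1 hi.2) (Finset.mem_Icc.2 ⟨h3, hj⟩)
  rw [hr.2.2.2] at h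
  exact h

lemma abs_r_le_one (hr : memR Δ r) {k : ℕ} (hk : k ∈ Finset.range (Δ - 1)) :
    |r (k + 2)| ≤ 1 := by
  rw [Finset.mem_range] at hk
  rcases Nat.eq_zero_or_pos k with h | h
  · subst h; rw [hr.1]; norm_num
  · have h3 : 3 ≤ k + 2 := by omega
    have hle : k + 2 ≤ Δ := by omega
    rw [abs_of_nonneg (r_nonneg hr h3 hle)]
    exact r_le_one hr h3 hle

lemma tailS_nonneg (hr : memR Δ r) {m : ℕ} (h3 : 3 ≤ m) : 0 ≤ tailS Δ r m := by
  apply Finset.sum_nonneg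
  intro d hd
  rw [Finset.mem_Icc] at hd
  exact hr.2.1 d (le_trans h3 hd.1) hd.2

lemma tailS_le_one (hr : memR Δ r) {m : ℕ} (h3 : 3 ≤ m) : tailS Δ r m ≤ 1 := by
  have h : tailS Δ r m ≤ ∑ k ∈ Finset.Icc 3 Δ, r k := by
    apply Finset.sum_le_sum_of_subset_of_nonneg
    · intro d hd
      rw [Finset.mem_Icc] at hd ⊢
      exact ⟨le_trans h3 hd.1, hd.2⟩
    · intro i hi _
      rw [Finset.mem_Icc] at hi
      exact hr.2.1 i hi.1 hi.2
  rw [hr.2.2.2] at h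
  exact h

lemma ups_eq (hΔ : 3 ≤ Δ) (hr : memR Δ r) :
    Upsilon Δ r =
      (∑ k ∈ Finset.range (Δ - 1), r (k + 2) / (Nat.factorial k : ℝ) * ((k + 2).factorial : ℝ))
        - ∑ k ∈ Finset.Icc 2 (Δ - 1), tailS Δ r (k + 1) / (Nat.factorial k : ℝ) * (Nat.factorial k : ℝ) := by
  have hfac : ∀ k : ℕ, r (k + 2) / (Nat.factorial k : ℝ) * ((k + 2).factorial : ℝ)
      = ((k : ℝ) + 1) * ((k : ℝ) + 2) * r (k + 2) := by
    intro k
    have h1 : ((k + 2).factorial : ℝ) = ((k : ℝ) + 2) * (((k : ℝ) + 1) * (Nat.factorial k : ℝ)) := by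
      rw [show k + 2 = (k + 1) + 1 from rfl, Nat.factorial_succ, Nat.factorial_succ]
      push_cast; ring
    rw [h1]
    have : (Nat.factorial k : ℝ) ≠ 0 := Nat.cast_ne_zero.2 k.factorial_ne_zero
    field_simp
  have hfac2 : ∀ k : ℕ, tailS Δ r (k + 1) / (Nat.factorial k : ℝ) * (Nat.factorial k : ℝ)
      = tailS Δ r (k + 1) := by
    intro k
    have : (Nat.factorial k : ℝ) ≠ 0 := Nat.cast_ne_zero.2 k.factorial_ne_zero
    field_simp
  simp only [hfac, hfac2]
  -- first sum
  have h1 : ∑ k ∈ Finset.range (Δ - 1), ((k : ℝ) + 1) * ((k : ℝ) + 2) * r (k + 2)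
      = ∑ j ∈ Finset.Icc 2 Δ, ((j : ℝ) - 1) * (j : ℝ) * r j := by
    apply Finset.sum_nbij' (fun k => k + 2) (fun j => j - 2)
    · intro a ha; rw [Finset.mem_range] at ha; rw [Finset.mem_Icc]; omega
    · intro a ha; rw [Finset.mem_Icc] at ha; rw [Finset.mem_range]; omega
    · intro a _; omega
    · intro a ha; rw [Finset.mem_Icc] at ha; omega
    · intro a _; push_cast; ring
  have hsplit : Finset.Icc 2 Δ = insert 2 (Finset.Icc 3 Δ) := by
    ext a; simp only [Finset.mem_Icc, Finset.mem_insert]; omega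
  have h1' : ∑ j ∈ Finset.Icc 2 Δ, ((j : ℝ) - 1) * (j : ℝ) * r j
      = -2 + ∑ j ∈ Finset.Icc 3 Δ, ((j : ℝ) - 1) * (j : ℝ) * r j := by
    rw [hsplit, Finset.sum_insert (by simp)]
    rw [hr.1]; norm_num
  -- second sum
  have h2 : ∑ k ∈ Finset.Icc 2 (Δ - 1), tailS Δ r (k + 1) = ∑ m ∈ Finset.Icc 3 Δ, tailS Δ r m := by
    apply Finset.sum_nbij' (fun k => k + 1) (fun m => m - 1)
    · intro a ha; rw [Finset.mem_Icc] at ha ⊢; omega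
    · intro a ha; rw [Finset.mem_Icc] at ha ⊢; omega
    · intro a _; omega
    · intro a ha; rw [Finset.mem_Icc] at ha; omega
    · intro a _; rfl
  have h3 : ∑ m ∈ Finset.Icc 3 Δ, tailS Δ r m = ∑ d ∈ Finset.Icc 3 Δ, ((d : ℝ) - 2) * r d := by
    unfold tailS
    rw [Finset.sum_comm' (t' := Finset.Icc 3 Δ) (s' := fun d => Finset.Icc 3 d)
      (by intro x y; simp only [Finset.mem_Icc]; omega)]
    apply Finset.sum_congr rfl
    intro d hd
    rw [Finset.mem_Icc] at hd
    rw [Finset.sum_const, Nat.card_Icc, nsmul_eq_mul]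
    congr 1
    push_cast [Nat.cast_sub (show 2 ≤ d by omega)]
    ring
  rw [h1, h1', h2, h3]
  have hcomb : (∑ j ∈ Finset.Icc 3 Δ, ((j : ℝ) - 1) * (j : ℝ) * r j)
      - ∑ d ∈ Finset.Icc 3 Δ, ((d : ℝ) - 2) * r d = Upsilon Δ r + 2 := by
    rw [← Finset.sum_sub_distrib]
    have h : ∀ j ∈ Finset.Icc 3 Δ, ((j : ℝ) - 1) * (j : ℝ) * r j - ((j : ℝ) - 2) * r j
        = (j : ℝ) * ((j : ℝ) - 2) * r j + 2 * r j := by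
      intro j _; ring
    rw [Finset.sum_congr rfl h, Finset.sum_add_distrib, ← Finset.mul_sum, hr.2.2.2]
    unfold Upsilon
    ring
  unfold Upsilon at hcomb ⊢
  linarith

lemma pow_le_factorial_mul_exp {m : ℕ} {y : ℝ} (hy : 0 ≤ y) :
    y ^ m ≤ (m.factorial : ℝ) * Real.exp y := by
  have h1 : y ^ m / (m.factorial : ℝ) ≤ ∑ i ∈ Finset.range (m + 1), y ^ i / (i.factorial : ℝ) :=
    Finset.single_le_sum (f := fun i => y ^ i / (i.factorial : ℝ))
      (fun i _ => by positivity) (Finset.self_mem_range_succ m)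
  have h2 := Real.sum_le_exp_of_nonneg hy (m + 1)
  have hm : (0:ℝ) < (m.factorial : ℝ) := by exact_mod_cast m.factorial_pos
  rw [div_le_iff₀ hm] at h1
  nlinarith [h1, h2]

lemma ppoly_nonneg (hr : memR Δ r) {x : ℝ} (hx : 0 ≤ x) : 0 ≤ ppoly Δ r x := by
  apply Finset.sum_nonneg
  intro k hk
  rw [Finset.mem_Icc] at hk
  have ht := tailS_nonneg hr (m := k + 1) (by omega)
  positivity

lemma Ffun_nonneg (hr : memR Δ r) {y : ℝ} (hy : 0 ≤ y) : 0 ≤ Ffun Δ r y := by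
  apply intervalIntegral.integral_nonneg hy
  intro x hx
  have hx0 := hx.1
  have hp := ppoly_nonneg hr hx0
  positivity

lemma cfun_nonneg {y : ℝ} (hy : 0 ≤ y) : 0 ≤ cfun y := by
  unfold cfun; positivity

lemma Ffun_le (hr : memR Δ r) {y : ℝ} (hy : 0 ≤ y) :
    Ffun Δ r y ≤ y * (Real.exp y / (1 + y) ^ 2 * ppoly Δ r y) := by
  unfold Ffun
  have hkey : ∀ x, 0 ≤ x → x ≤ y →
      Real.exp x / (1 + x) ^ 2 * ppoly Δ r x ≤ Real.exp y / (1 + y) ^ 2 * ppoly Δ r y := by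
    intro x hx hxy
    have hx1 : (0:ℝ) < (1 + x) ^ 2 := by positivity
    have hy1 : (0:ℝ) < (1 + y) ^ 2 := by positivity
    rw [div_mul_eq_mul_div, div_mul_eq_mul_div, div_le_div_iff₀ hx1 hy1]
    have expand : ∀ a b : ℝ, Real.exp a * ppoly Δ r a * b
        = ∑ k ∈ Finset.Icc 2 (Δ - 1), tailS Δ r (k + 1) / (Nat.factorial k : ℝ) * (Real.exp a * (a ^ k * b)) := by
      intro a b
      unfold ppoly
      rw [Finset.mul_sum, Finset.sum_mul]
      apply Finset.sum_congr rfl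
      intro k _
      have hfk : (Nat.factorial k : ℝ) ≠ 0 := Nat.cast_ne_zero.2 k.factorial_ne_zero
      field_simp
    rw [expand x ((1+y)^2), expand y ((1+x)^2)]
    apply Finset.sum_le_sum
    intro k hk
    rw [Finset.mem_Icc] at hk
    have ht0 := tailS_nonneg hr (m := k + 1) (by omega)
    have hfk : (0:ℝ) ≤ (Nat.factorial k : ℝ) := by positivity
    apply mul_le_mul_of_nonneg_left ?_ (div_nonneg ht0 hfk)
    obtain ⟨j, rfl⟩ : ∃ j, k = j + 2 := ⟨k - 2, by omega⟩
    have hpow : x ^ (j + 2) * (1 + y) ^ 2 ≤ y ^ (j + 2) * (1 + x) ^ 2 := by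
      have h1 : x ^ j ≤ y ^ j := pow_le_pow_left₀ hx hxy j
      have h2 : (x * (1 + y)) ^ 2 ≤ (y * (1 + x)) ^ 2 := by
        apply pow_le_pow_left₀ (by positivity)
        nlinarith
      calc x ^ (j + 2) * (1 + y) ^ 2 = x ^ j * (x * (1 + y)) ^ 2 := by ring
        _ ≤ y ^ j * (y * (1 + x)) ^ 2 := by
            apply mul_le_mul h1 h2 (by positivity) (by positivity)
        _ = y ^ (j + 2) * (1 + x) ^ 2 := by ring
    exact mul_le_mul (Real.exp_le_exp.2 hxy) hpow (by positivity) (Real.exp_pos y).le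
  calc (∫ x in (0:ℝ)..y, Real.exp x / (1 + x) ^ 2 * ppoly Δ r x)
      ≤ ∫ _x in (0:ℝ)..y, Real.exp y / (1 + y) ^ 2 * ppoly Δ r y := by
        apply intervalIntegral.integral_mono_on hy (g_intable hy) intervalIntegrable_const
        intro x hx
        exact hkey x hx.1 hx.2
    _ = y * (Real.exp y / (1 + y) ^ 2 * ppoly Δ r y) := by
        rw [intervalIntegral.integral_const, smul_eq_mul, sub_zero]

lemma term3_le (hr : memR Δ r) {y : ℝ} (hy : 0 ≤ y) :
    cfun y * Ffun Δ r y ≤ Real.exp (-y) * (y * ((1 + y) * ppoly Δ r y)) := by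
  have h1 : cfun y * Ffun Δ r y ≤ cfun y * (y * (Real.exp y / (1 + y) ^ 2 * ppoly Δ r y)) :=
    mul_le_mul_of_nonneg_left (Ffun_le hr hy) (cfun_nonneg hy)
  refine h1.trans ?_
  unfold cfun
  have h1y : (0:ℝ) < 1 + y := by linarith
  have hcube : y ^ 3 + 2 * y ^ 2 + 2 * y + 1 ≤ (1 + y) ^ 3 := by nlinarith
  have hexp : Real.exp (-y) ^ 2 * Real.exp y = Real.exp (-y) := by
    rw [sq, ← Real.exp_add, ← Real.exp_add]
    congr 1
    ring
  have hp := ppoly_nonneg hr hy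
  calc Real.exp (-y) ^ 2 * (y ^ 3 + 2 * y ^ 2 + 2 * y + 1) * (y * (Real.exp y / (1 + y) ^ 2 * ppoly Δ r y))
      = (Real.exp (-y) ^ 2 * Real.exp y) * y * ppoly Δ r y * ((y ^ 3 + 2 * y ^ 2 + 2 * y + 1) / (1 + y) ^ 2) := by
        ring
    _ ≤ (Real.exp (-y) ^ 2 * Real.exp y) * y * ppoly Δ r y * ((1 + y) ^ 3 / (1 + y) ^ 2) := by
        apply mul_le_mul_of_nonneg_left (div_le_div_of_nonneg_right hcube (by positivity))
        have := (Real.exp_pos (-y)).le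
        positivity
    _ = Real.exp (-y) * (y * ((1 + y) * ppoly Δ r y)) := by
        rw [hexp]
        field_simp

lemma expneg_pow_le {m : ℕ} {y : ℝ} (hy : 0 ≤ y) :
    Real.exp (-y) * y ^ m ≤ (m.factorial : ℝ) := by
  have h := pow_le_factorial_mul_exp (m := m) hy
  have h2 : Real.exp (-y) * y ^ m ≤ Real.exp (-y) * ((m.factorial : ℝ) * Real.exp y) :=
    mul_le_mul_of_nonneg_left h (Real.exp_pos _).le
  refine h2.trans_eq ?_
  rw [mul_comm (m.factorial : ℝ) (Real.exp y), ← mul_assoc, ← Real.exp_add]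
  simp

lemma int_expand {y : ℝ} :
    (∫ x in (0:ℝ)..y, Real.exp (-x) * (x ^ 2 * qpoly Δ r x - ppoly Δ r x))
      = (∑ k ∈ Finset.range (Δ - 1), r (k + 2) / (Nat.factorial k : ℝ) *
          ∫ x in (0:ℝ)..y, Real.exp (-x) * x ^ (k + 2))
        - ∑ k ∈ Finset.Icc 2 (Δ - 1), tailS Δ r (k + 1) / (Nat.factorial k : ℝ) *
          ∫ x in (0:ℝ)..y, Real.exp (-x) * x ^ k := by
  have hfun : (fun x => Real.exp (-x) * (x ^ 2 * qpoly Δ r x - ppoly Δ r x))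
      = fun x => (∑ k ∈ Finset.range (Δ - 1), r (k + 2) / (Nat.factorial k : ℝ) *
            (Real.exp (-x) * x ^ (k + 2)))
          - ∑ k ∈ Finset.Icc 2 (Δ - 1), tailS Δ r (k + 1) / (Nat.factorial k : ℝ) *
            (Real.exp (-x) * x ^ k) := by
    funext x
    unfold qpoly ppoly
    rw [mul_sub]
    congr 1
    · rw [Finset.mul_sum, Finset.mul_sum]
      apply Finset.sum_congr rfl
      intro k _
      have hfk : (Nat.factorial k : ℝ) ≠ 0 := Nat.cast_ne_zero.2 k.factorial_ne_zero
      rw [pow_add]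
      field_simp
    · rw [Finset.mul_sum]
      apply Finset.sum_congr rfl
      intro k _
      have hfk : (Nat.factorial k : ℝ) ≠ 0 := Nat.cast_ne_zero.2 k.factorial_ne_zero
      field_simp
  rw [hfun]
  rw [intervalIntegral.integral_sub
    ((Continuous.intervalIntegrable (continuous_finset_sum _ fun k _ => by fun_prop) _ _))
    ((Continuous.intervalIntegrable (continuous_finset_sum _ fun k _ => by fun_prop) _ _))]
  rw [intervalIntegral.integral_finset_sum
    (fun k _ => Continuous.intervalIntegrable (by fun_prop) _ _)]
  rw [intervalIntegral.integral_finset_sum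
    (fun k _ => Continuous.intervalIntegrable (by fun_prop) _ _)]
  simp_rw [intervalIntegral.integral_const_mul]

lemma term3_sum_le (hΔ : 3 ≤ Δ) (hr : memR Δ r) {y : ℝ} (hy : 0 ≤ y) :
    cfun y * Ffun Δ r y ≤ ((Δ : ℝ) - 2) * ((Δ : ℝ) * ((Δ : ℝ) + 2)) := by
  refine (term3_le hr hy).trans ?_
  have hexpand : Real.exp (-y) * (y * ((1 + y) * ppoly Δ r y))
      = ∑ k ∈ Finset.Icc 2 (Δ - 1), tailS Δ r (k + 1) / (Nat.factorial k : ℝ) *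
          (Real.exp (-y) * y ^ (k + 1) + Real.exp (-y) * y ^ (k + 2)) := by
    unfold ppoly
    rw [Finset.mul_sum, Finset.mul_sum, Finset.mul_sum]
    apply Finset.sum_congr rfl
    intro k _
    have hfk : (Nat.factorial k : ℝ) ≠ 0 := Nat.cast_ne_zero.2 k.factorial_ne_zero
    rw [pow_add, pow_add]
    field_simp
  rw [hexpand]
  have hbound : ∀ k ∈ Finset.Icc 2 (Δ - 1),
      tailS Δ r (k + 1) / (Nat.factorial k : ℝ) *
        (Real.exp (-y) * y ^ (k + 1) + Real.exp (-y) * y ^ (k + 2))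
      ≤ (Δ : ℝ) * ((Δ : ℝ) + 2) := by
    intro k hk
    rw [Finset.mem_Icc] at hk
    have ht0 := tailS_nonneg hr (m := k + 1) (by omega)
    have ht1 := tailS_le_one hr (m := k + 1) (by omega)
    have hfk : (0:ℝ) < (Nat.factorial k : ℝ) := by exact_mod_cast k.factorial_pos
    have h1 := expneg_pow_le (m := k + 1) hy
    have h2 := expneg_pow_le (m := k + 2) hy
    have hd1 : tailS Δ r (k + 1) / (Nat.factorial k : ℝ) ≤ 1 / (Nat.factorial k : ℝ) := by
      exact div_le_div_of_nonneg_right ht1 hfk.le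
    have hstep : tailS Δ r (k + 1) / (Nat.factorial k : ℝ) *
        (Real.exp (-y) * y ^ (k + 1) + Real.exp (-y) * y ^ (k + 2))
        ≤ 1 / (Nat.factorial k : ℝ) * (((k + 1).factorial : ℝ) + ((k + 2).factorial : ℝ)) := by
      apply mul_le_mul hd1 (add_le_add h1 h2) (by positivity) (by positivity)
    refine hstep.trans ?_
    have hf1 : ((k + 1).factorial : ℝ) = ((k : ℝ) + 1) * (Nat.factorial k : ℝ) := by
      rw [Nat.factorial_succ]; push_cast; ring
    have hf2 : ((k + 2).factorial : ℝ) = ((k : ℝ) + 2) * (((k : ℝ) + 1) * (Nat.factorial k : ℝ)) := by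
      rw [show k + 2 = (k + 1) + 1 from rfl, Nat.factorial_succ, Nat.factorial_succ]
      push_cast; ring
    rw [hf1, hf2]
    have heq : 1 / (Nat.factorial k : ℝ) * (((k : ℝ) + 1) * (Nat.factorial k : ℝ)
        + ((k : ℝ) + 2) * (((k : ℝ) + 1) * (Nat.factorial k : ℝ)))
        = ((k : ℝ) + 1) * ((k : ℝ) + 3) := by
      field_simp
      ring
    rw [heq]
    have hk1 : (k : ℝ) + 1 ≤ (Δ : ℝ) := by
      have : k + 1 ≤ Δ := by omega
      exact_mod_cast this
    have hk3 : (k : ℝ) + 3 ≤ (Δ : ℝ) + 2 := by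
      have : k + 3 ≤ Δ + 2 := by omega
      exact_mod_cast this
    have hk0 : (0:ℝ) ≤ (k : ℝ) + 1 := by positivity
    nlinarith
  calc (∑ k ∈ Finset.Icc 2 (Δ - 1), tailS Δ r (k + 1) / (Nat.factorial k : ℝ) *
          (Real.exp (-y) * y ^ (k + 1) + Real.exp (-y) * y ^ (k + 2)))
      ≤ (Finset.Icc 2 (Δ - 1)).card • ((Δ : ℝ) * ((Δ : ℝ) + 2)) :=
        Finset.sum_le_card_nsmul _ _ _ hbound
    _ = ((Δ : ℝ) - 2) * ((Δ : ℝ) * ((Δ : ℝ) + 2)) := by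
        rw [Nat.card_Icc, nsmul_eq_mul]
        congr 1
        have : Δ - 1 + 1 - 2 = Δ - 2 := by omega
        rw [this, Nat.cast_sub (by omega)]
        norm_num

lemma fac_ratio2 (k : ℕ) :
    ((k + 2).factorial : ℝ) / (Nat.factorial k : ℝ) = ((k : ℝ) + 1) * ((k : ℝ) + 2) := by
  have hfk : (Nat.factorial k : ℝ) ≠ 0 := Nat.cast_ne_zero.2 k.factorial_ne_zero
  rw [show k + 2 = (k + 1) + 1 from rfl, Nat.factorial_succ, Nat.factorial_succ]
  push_cast
  field_simp
  ring

lemma G_bound (hΔ : 3 ≤ Δ) (hr : memR Δ r) {y : ℝ} (hy : 0 ≤ y) :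
    |Gfun Δ r y| ≤ 2 * (Δ : ℝ) ^ 2 * ((Δ : ℝ) + 1) := by
  have hD3 : (3:ℝ) ≤ (Δ : ℝ) := by exact_mod_cast hΔ
  unfold Gfun
  rw [int_expand]
  have hb1 : |∑ k ∈ Finset.range (Δ - 1), r (k + 2) / (Nat.factorial k : ℝ) *
      ∫ x in (0:ℝ)..y, Real.exp (-x) * x ^ (k + 2)|
      ≤ ((Δ : ℝ) - 1) * ((Δ : ℝ) * ((Δ : ℝ) + 1)) := by
    refine (Finset.abs_sum_le_sum_abs _ _).trans ?_
    have hterm : ∀ k ∈ Finset.range (Δ - 1),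
        |r (k + 2) / (Nat.factorial k : ℝ) * ∫ x in (0:ℝ)..y, Real.exp (-x) * x ^ (k + 2)|
        ≤ (Δ : ℝ) * ((Δ : ℝ) + 1) := by
      intro k hk
      have hrk := abs_r_le_one hr hk
      rw [Finset.mem_range] at hk
      have hfk : (0:ℝ) < (Nat.factorial k : ℝ) := by exact_mod_cast k.factorial_pos
      have hA0 := intA_nonneg (m := k + 2) hy
      have hAle := intA_le (m := k + 2) hy
      rw [abs_mul, abs_div, abs_of_nonneg hA0, abs_of_nonneg hfk.le]
      have step : |r (k + 2)| / (Nat.factorial k : ℝ) *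
          (∫ x in (0:ℝ)..y, Real.exp (-x) * x ^ (k + 2))
          ≤ 1 / (Nat.factorial k : ℝ) * ((k + 2).factorial : ℝ) :=
        mul_le_mul (div_le_div_of_nonneg_right hrk hfk.le) hAle hA0 (by positivity)
      refine step.trans ?_
      rw [one_div, ← div_eq_inv_mul, fac_ratio2 k]
      have hk1 : (k : ℝ) + 1 ≤ (Δ : ℝ) := by exact_mod_cast (show k + 1 ≤ Δ by omega)
      have hk2 : (k : ℝ) + 2 ≤ (Δ : ℝ) + 1 := by exact_mod_cast (show k + 2 ≤ Δ + 1 by omega)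
      nlinarith
    calc (∑ k ∈ Finset.range (Δ - 1),
          |r (k + 2) / (Nat.factorial k : ℝ) * ∫ x in (0:ℝ)..y, Real.exp (-x) * x ^ (k + 2)|)
        ≤ (Finset.range (Δ - 1)).card • ((Δ : ℝ) * ((Δ : ℝ) + 1)) :=
          Finset.sum_le_card_nsmul _ _ _ hterm
      _ = ((Δ : ℝ) - 1) * ((Δ : ℝ) * ((Δ : ℝ) + 1)) := by
          rw [Finset.card_range, nsmul_eq_mul, Nat.cast_sub (by omega), Nat.cast_one]
  have hb2 : |∑ k ∈ Finset.Icc 2 (Δ - 1), tailS Δ r (k + 1) / (Nat.factorial k : ℝ) *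
      ∫ x in (0:ℝ)..y, Real.exp (-x) * x ^ k| ≤ (Δ : ℝ) - 2 := by
    refine (Finset.abs_sum_le_sum_abs _ _).trans ?_
    have hterm : ∀ k ∈ Finset.Icc 2 (Δ - 1),
        |tailS Δ r (k + 1) / (Nat.factorial k : ℝ) * ∫ x in (0:ℝ)..y, Real.exp (-x) * x ^ k|
        ≤ 1 := by
      intro k hk
      rw [Finset.mem_Icc] at hk
      have ht0 := tailS_nonneg hr (m := k + 1) (by omega)
      have ht1 := tailS_le_one hr (m := k + 1) (by omega)
      have hfk : (0:ℝ) < (Nat.factorial k : ℝ) := by exact_mod_cast k.factorial_pos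
      have hA0 := intA_nonneg (m := k) hy
      have hAle := intA_le (m := k) hy
      rw [abs_mul, abs_div, abs_of_nonneg hA0, abs_of_nonneg hfk.le, abs_of_nonneg ht0]
      have step : tailS Δ r (k + 1) / (Nat.factorial k : ℝ) *
          (∫ x in (0:ℝ)..y, Real.exp (-x) * x ^ k)
          ≤ 1 / (Nat.factorial k : ℝ) * (Nat.factorial k : ℝ) :=
        mul_le_mul (div_le_div_of_nonneg_right ht1 hfk.le) hAle hA0 (by positivity)
      refine step.trans ?_
      rw [one_div_mul_cancel hfk.ne']
    calc (∑ k ∈ Finset.Icc 2 (Δ - 1),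
          |tailS Δ r (k + 1) / (Nat.factorial k : ℝ) * ∫ x in (0:ℝ)..y, Real.exp (-x) * x ^ k|)
        ≤ (Finset.Icc 2 (Δ - 1)).card • (1:ℝ) := Finset.sum_le_card_nsmul _ _ _ hterm
      _ = (Δ : ℝ) - 2 := by
          rw [Nat.card_Icc, nsmul_eq_mul, mul_one]
          rw [show Δ - 1 + 1 - 2 = Δ - 2 by omega, Nat.cast_sub (by omega)]
          norm_num
  have hb3 := term3_sum_le hΔ hr hy
  have hb30 : 0 ≤ cfun y * Ffun Δ r y := mul_nonneg (cfun_nonneg hy) (Ffun_nonneg hr hy)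
  set S1 := ∑ k ∈ Finset.range (Δ - 1), r (k + 2) / (Nat.factorial k : ℝ) *
      ∫ x in (0:ℝ)..y, Real.exp (-x) * x ^ (k + 2) with hS1
  set S2 := ∑ k ∈ Finset.Icc 2 (Δ - 1), tailS Δ r (k + 1) / (Nat.factorial k : ℝ) *
      ∫ x in (0:ℝ)..y, Real.exp (-x) * x ^ k with hS2
  set T3 := cfun y * Ffun Δ r y with hT3
  have habs : |S1 - S2 + T3| ≤ |S1| + |S2| + |T3| := by
    calc |S1 - S2 + T3| ≤ |S1 - S2| + |T3| := abs_add_le _ _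
      _ ≤ |S1| + |S2| + |T3| := by
          have : |S1 - S2| ≤ |S1| + |S2| := abs_sub _ _
          linarith
  rw [abs_of_nonneg hb30] at habs
  refine habs.trans ?_
  nlinarith

lemma ppoly_le (hΔ : 3 ≤ Δ) (hr : memR Δ r) {y : ℝ} (hy : 0 ≤ y) :
    ppoly Δ r y ≤ ((Δ : ℝ) - 2) * (1 + y) ^ (Δ - 1) := by
  have hterm : ∀ k ∈ Finset.Icc 2 (Δ - 1),
      y ^ k / (Nat.factorial k : ℝ) * tailS Δ r (k + 1) ≤ (1 + y) ^ (Δ - 1) := by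
    intro k hk
    rw [Finset.mem_Icc] at hk
    have ht0 := tailS_nonneg hr (m := k + 1) (by omega)
    have ht1 := tailS_le_one hr (m := k + 1) (by omega)
    have hfk : (1:ℝ) ≤ (Nat.factorial k : ℝ) := by exact_mod_cast k.factorial_pos
    have hyk : y ^ k ≤ (1 + y) ^ (Δ - 1) := by
      calc y ^ k ≤ (1 + y) ^ k := pow_le_pow_left₀ hy (by linarith) k
        _ ≤ (1 + y) ^ (Δ - 1) := pow_le_pow_right₀ (by linarith) hk.2
    have h1 : y ^ k / (Nat.factorial k : ℝ) ≤ y ^ k := div_le_self (by positivity) hfk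
    calc y ^ k / (Nat.factorial k : ℝ) * tailS Δ r (k + 1)
        ≤ y ^ k / (Nat.factorial k : ℝ) * 1 := mul_le_mul_of_nonneg_left ht1 (by positivity)
      _ = y ^ k / (Nat.factorial k : ℝ) := mul_one _
      _ ≤ y ^ k := h1
      _ ≤ (1 + y) ^ (Δ - 1) := hyk
  calc ppoly Δ r y ≤ (Finset.Icc 2 (Δ - 1)).card • ((1 + y) ^ (Δ - 1)) :=
        Finset.sum_le_card_nsmul _ _ _ hterm
    _ = ((Δ : ℝ) - 2) * (1 + y) ^ (Δ - 1) := by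
        rw [Nat.card_Icc, nsmul_eq_mul, show Δ - 1 + 1 - 2 = Δ - 2 by omega,
          Nat.cast_sub (by omega)]
        norm_num

lemma facsucc2 (k : ℕ) :
    ((k + 2).factorial : ℝ) = ((k : ℝ) + 2) * (((k : ℝ) + 1) * (Nat.factorial k : ℝ)) := by
  rw [show k + 2 = (k + 1) + 1 from rfl, Nat.factorial_succ, Nat.factorial_succ]
  push_cast
  ring

lemma G_err (hΔ : 3 ≤ Δ) (hr : memR Δ r) {y : ℝ} (hy : 0 ≤ y) :
    |Gfun Δ r y - Upsilon Δ r| ≤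
      ((Δ : ℝ) + 1) ^ 5 * (Real.exp (-y) * (1 + y) ^ (Δ + 2)) := by
  have hD3 : (3:ℝ) ≤ (Δ : ℝ) := by exact_mod_cast hΔ
  have h1y : (1:ℝ) ≤ 1 + y := by linarith
  have hE0 : (0:ℝ) ≤ Real.exp (-y) * (1 + y) ^ Δ := by positivity
  have hEB0 : (0:ℝ) ≤ Real.exp (-y) * (1 + y) ^ (Δ + 2) := by positivity
  have hEle : Real.exp (-y) * (1 + y) ^ Δ ≤ Real.exp (-y) * (1 + y) ^ (Δ + 2) :=
    mul_le_mul_of_nonneg_left (pow_le_pow_right₀ h1y (by omega)) (Real.exp_pos _).le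
  have hd1 : |(∑ k ∈ Finset.range (Δ - 1), r (k + 2) / (Nat.factorial k : ℝ) *
        ∫ x in (0:ℝ)..y, Real.exp (-x) * x ^ (k + 2))
      - ∑ k ∈ Finset.range (Δ - 1), r (k + 2) / (Nat.factorial k : ℝ) * ((k + 2).factorial : ℝ)|
      ≤ ((Δ : ℝ) + 1) ^ 4 * (Real.exp (-y) * (1 + y) ^ Δ) := by
    rw [← Finset.sum_sub_distrib]
    refine (Finset.abs_sum_le_sum_abs _ _).trans ?_
    have hterm : ∀ k ∈ Finset.range (Δ - 1),
        |r (k + 2) / (Nat.factorial k : ℝ) * (∫ x in (0:ℝ)..y, Real.exp (-x) * x ^ (k + 2))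
          - r (k + 2) / (Nat.factorial k : ℝ) * ((k + 2).factorial : ℝ)|
        ≤ ((Δ : ℝ) + 1) ^ 3 * (Real.exp (-y) * (1 + y) ^ Δ) := by
      intro k hk
      have hrk := abs_r_le_one hr hk
      rw [Finset.mem_range] at hk
      have hfk : (0:ℝ) < (Nat.factorial k : ℝ) := by exact_mod_cast k.factorial_pos
      rw [← mul_sub, abs_mul, abs_div, abs_of_nonneg hfk.le]
      have herr := intA_err (m := k + 2) hy
      have step : |r (k + 2)| / (Nat.factorial k : ℝ) *
          |(∫ x in (0:ℝ)..y, Real.exp (-x) * x ^ (k + 2)) - ((k + 2).factorial : ℝ)|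
          ≤ 1 / (Nat.factorial k : ℝ) *
            (Real.exp (-y) * ((((k:ℝ) + 2) + 1) * ((k + 2).factorial : ℝ) * (1 + y) ^ (k + 2))) := by
        apply mul_le_mul (div_le_div_of_nonneg_right hrk hfk.le) ?_ (abs_nonneg _) (by positivity)
        exact herr.trans_eq (by simp only [Nat.cast_add, Nat.cast_ofNat])
      refine step.trans ?_
      have heq : 1 / (Nat.factorial k : ℝ) *
          (Real.exp (-y) * ((((k:ℝ) + 2) + 1) * ((k + 2).factorial : ℝ) * (1 + y) ^ (k + 2)))
          = (((k:ℝ) + 1) * ((k:ℝ) + 2) * ((k:ℝ) + 3)) * (Real.exp (-y) * (1 + y) ^ (k + 2)) := by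
        rw [facsucc2 k]
        field_simp
        ring
      rw [heq]
      have hk1 : (k : ℝ) + 1 ≤ (Δ : ℝ) + 1 := by exact_mod_cast (show k + 1 ≤ Δ + 1 by omega)
      have hk2 : (k : ℝ) + 2 ≤ (Δ : ℝ) + 1 := by exact_mod_cast (show k + 2 ≤ Δ + 1 by omega)
      have hk3 : (k : ℝ) + 3 ≤ (Δ : ℝ) + 1 := by exact_mod_cast (show k + 3 ≤ Δ + 1 by omega)
      have hpy : (1 + y) ^ (k + 2) ≤ (1 + y) ^ Δ := pow_le_pow_right₀ h1y (by omega)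
      calc (((k:ℝ) + 1) * ((k:ℝ) + 2) * ((k:ℝ) + 3)) * (Real.exp (-y) * (1 + y) ^ (k + 2))
          ≤ (((Δ:ℝ) + 1) * ((Δ:ℝ) + 1) * ((Δ:ℝ) + 1)) * (Real.exp (-y) * (1 + y) ^ Δ) := by
            apply mul_le_mul ?_ (mul_le_mul_of_nonneg_left hpy (Real.exp_pos _).le)
              (by positivity) (by positivity)
            apply mul_le_mul (mul_le_mul hk1 hk2 (by positivity) (by positivity)) hk3
              (by positivity) (by positivity)
        _ = ((Δ:ℝ) + 1) ^ 3 * (Real.exp (-y) * (1 + y) ^ Δ) := by ring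
    calc (∑ k ∈ Finset.range (Δ - 1),
          |r (k + 2) / (Nat.factorial k : ℝ) * (∫ x in (0:ℝ)..y, Real.exp (-x) * x ^ (k + 2))
            - r (k + 2) / (Nat.factorial k : ℝ) * ((k + 2).factorial : ℝ)|)
        ≤ (Finset.range (Δ - 1)).card • (((Δ : ℝ) + 1) ^ 3 * (Real.exp (-y) * (1 + y) ^ Δ)) :=
          Finset.sum_le_card_nsmul _ _ _ hterm
      _ = ((Δ - 1 : ℕ) : ℝ) * (((Δ : ℝ) + 1) ^ 3 * (Real.exp (-y) * (1 + y) ^ Δ)) := by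
          rw [Finset.card_range, nsmul_eq_mul]
      _ ≤ ((Δ : ℝ) + 1) * (((Δ : ℝ) + 1) ^ 3 * (Real.exp (-y) * (1 + y) ^ Δ)) := by
          apply mul_le_mul_of_nonneg_right ?_ (by positivity)
          exact_mod_cast (show Δ - 1 ≤ Δ + 1 by omega)
      _ = ((Δ : ℝ) + 1) ^ 4 * (Real.exp (-y) * (1 + y) ^ Δ) := by ring
  have hd2 : |(∑ k ∈ Finset.Icc 2 (Δ - 1), tailS Δ r (k + 1) / (Nat.factorial k : ℝ) *
        ∫ x in (0:ℝ)..y, Real.exp (-x) * x ^ k)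
      - ∑ k ∈ Finset.Icc 2 (Δ - 1), tailS Δ r (k + 1) / (Nat.factorial k : ℝ) * (Nat.factorial k : ℝ)|
      ≤ ((Δ : ℝ) + 1) ^ 2 * (Real.exp (-y) * (1 + y) ^ Δ) := by
    rw [← Finset.sum_sub_distrib]
    refine (Finset.abs_sum_le_sum_abs _ _).trans ?_
    have hterm : ∀ k ∈ Finset.Icc 2 (Δ - 1),
        |tailS Δ r (k + 1) / (Nat.factorial k : ℝ) * (∫ x in (0:ℝ)..y, Real.exp (-x) * x ^ k)
          - tailS Δ r (k + 1) / (Nat.factorial k : ℝ) * (Nat.factorial k : ℝ)|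
        ≤ ((Δ : ℝ) + 1) * (Real.exp (-y) * (1 + y) ^ Δ) := by
      intro k hk
      rw [Finset.mem_Icc] at hk
      have ht0 := tailS_nonneg hr (m := k + 1) (by omega)
      have ht1 := tailS_le_one hr (m := k + 1) (by omega)
      have hfk : (0:ℝ) < (Nat.factorial k : ℝ) := by exact_mod_cast k.factorial_pos
      rw [← mul_sub, abs_mul, abs_div, abs_of_nonneg hfk.le, abs_of_nonneg ht0]
      have herr := intA_err (m := k) hy
      have step : tailS Δ r (k + 1) / (Nat.factorial k : ℝ) *
          |(∫ x in (0:ℝ)..y, Real.exp (-x) * x ^ k) - (Nat.factorial k : ℝ)|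
          ≤ 1 / (Nat.factorial k : ℝ) *
            (Real.exp (-y) * (((k:ℝ) + 1) * (Nat.factorial k : ℝ) * (1 + y) ^ k)) :=
        mul_le_mul (div_le_div_of_nonneg_right ht1 hfk.le) herr (abs_nonneg _) (by positivity)
      refine step.trans ?_
      have heq : 1 / (Nat.factorial k : ℝ) *
          (Real.exp (-y) * (((k:ℝ) + 1) * (Nat.factorial k : ℝ) * (1 + y) ^ k))
          = ((k:ℝ) + 1) * (Real.exp (-y) * (1 + y) ^ k) := by
        field_simp
      rw [heq]
      have hk1 : (k : ℝ) + 1 ≤ (Δ : ℝ) + 1 := by exact_mod_cast (show k + 1 ≤ Δ + 1 by omega)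
      have hpy : (1 + y) ^ k ≤ (1 + y) ^ Δ := pow_le_pow_right₀ h1y (by omega)
      exact mul_le_mul hk1 (mul_le_mul_of_nonneg_left hpy (Real.exp_pos _).le)
        (by positivity) (by positivity)
    calc (∑ k ∈ Finset.Icc 2 (Δ - 1),
          |tailS Δ r (k + 1) / (Nat.factorial k : ℝ) * (∫ x in (0:ℝ)..y, Real.exp (-x) * x ^ k)
            - tailS Δ r (k + 1) / (Nat.factorial k : ℝ) * (Nat.factorial k : ℝ)|)
        ≤ (Finset.Icc 2 (Δ - 1)).card • (((Δ : ℝ) + 1) * (Real.exp (-y) * (1 + y) ^ Δ)) :=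
          Finset.sum_le_card_nsmul _ _ _ hterm
      _ = ((Δ - 1 + 1 - 2 : ℕ) : ℝ) * (((Δ : ℝ) + 1) * (Real.exp (-y) * (1 + y) ^ Δ)) := by
          rw [Nat.card_Icc, nsmul_eq_mul]
      _ ≤ ((Δ : ℝ) + 1) * (((Δ : ℝ) + 1) * (Real.exp (-y) * (1 + y) ^ Δ)) := by
          apply mul_le_mul_of_nonneg_right ?_ (by positivity)
          exact_mod_cast (show Δ - 1 + 1 - 2 ≤ Δ + 1 by omega)
      _ = ((Δ : ℝ) + 1) ^ 2 * (Real.exp (-y) * (1 + y) ^ Δ) := by ring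
  have hd3 : cfun y * Ffun Δ r y ≤ ((Δ : ℝ) + 1) * (Real.exp (-y) * (1 + y) ^ (Δ + 2)) := by
    refine (term3_le hr hy).trans ?_
    have hp := ppoly_le hΔ hr hy
    have hp0 := ppoly_nonneg hr hy
    calc Real.exp (-y) * (y * ((1 + y) * ppoly Δ r y))
        ≤ Real.exp (-y) * ((1 + y) * ((1 + y) * (((Δ : ℝ) - 2) * (1 + y) ^ (Δ - 1)))) := by
          apply mul_le_mul_of_nonneg_left ?_ (Real.exp_pos _).le
          apply mul_le_mul (by linarith) (mul_le_mul_of_nonneg_left hp (by linarith))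
            (by positivity) (by linarith)
      _ = ((Δ : ℝ) - 2) * (Real.exp (-y) * ((1 + y) ^ 2 * (1 + y) ^ (Δ - 1))) := by ring
      _ = ((Δ : ℝ) - 2) * (Real.exp (-y) * (1 + y) ^ (Δ + 1)) := by
          rw [← pow_add, show 2 + (Δ - 1) = Δ + 1 by omega]
      _ ≤ ((Δ : ℝ) + 1) * (Real.exp (-y) * (1 + y) ^ (Δ + 2)) := by
          apply mul_le_mul (by linarith) ?_ (by positivity) (by linarith)
          exact mul_le_mul_of_nonneg_left (pow_le_pow_right₀ h1y (by omega)) (Real.exp_pos _).le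
  have hd30 : 0 ≤ cfun y * Ffun Δ r y := mul_nonneg (cfun_nonneg hy) (Ffun_nonneg hr hy)
  have hfin : ((Δ:ℝ) + 1) ^ 4 * (Real.exp (-y) * (1 + y) ^ Δ)
      + ((Δ:ℝ) + 1) ^ 2 * (Real.exp (-y) * (1 + y) ^ Δ)
      + ((Δ:ℝ) + 1) * (Real.exp (-y) * (1 + y) ^ (Δ + 2))
      ≤ ((Δ : ℝ) + 1) ^ 5 * (Real.exp (-y) * (1 + y) ^ (Δ + 2)) := by
    have hD4 : (4:ℝ) ≤ (Δ : ℝ) + 1 := by linarith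
    have e1 : ((Δ:ℝ)+1)^4 * (Real.exp (-y) * (1 + y) ^ Δ)
        ≤ ((Δ:ℝ)+1)^4 * (Real.exp (-y) * (1 + y) ^ (Δ+2)) :=
      mul_le_mul_of_nonneg_left hEle (by positivity)
    have e2 : ((Δ:ℝ)+1)^2 * (Real.exp (-y) * (1 + y) ^ Δ)
        ≤ ((Δ:ℝ)+1)^2 * (Real.exp (-y) * (1 + y) ^ (Δ+2)) :=
      mul_le_mul_of_nonneg_left hEle (by positivity)
    have e3 : ((Δ:ℝ)+1)^4 + ((Δ:ℝ)+1)^2 + ((Δ:ℝ)+1) ≤ ((Δ:ℝ)+1)^5 := by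
      have hD1 : (1:ℝ) ≤ (Δ:ℝ)+1 := by linarith
      have p1 : ((Δ:ℝ)+1)^1 ≤ ((Δ:ℝ)+1)^4 := pow_le_pow_right₀ hD1 (by norm_num)
      have p2 : ((Δ:ℝ)+1)^2 ≤ ((Δ:ℝ)+1)^4 := pow_le_pow_right₀ hD1 (by norm_num)
      have p3 : 4 * ((Δ:ℝ)+1)^4 ≤ ((Δ:ℝ)+1) * ((Δ:ℝ)+1)^4 :=
        mul_le_mul_of_nonneg_right hD4 (by positivity)
      nlinarith [p1, p2, p3]
    have e4 := mul_le_mul_of_nonneg_right e3 hEB0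
    nlinarith [e1, e2, e4]
  unfold Gfun
  rw [int_expand, ups_eq hΔ hr, abs_le]
  obtain ⟨h1l, h1r⟩ := abs_le.mp hd1
  obtain ⟨h2l, h2r⟩ := abs_le.mp hd2
  constructor <;> linarith

set_option linter.unusedSectionVars false

section LamFacts
set_option linter.unusedSectionVars false
variable {lam : ℝ → ℝ} (hdiff : Differentiable ℝ lam) (h0 : lam 0 = 0)
  (hode : ∀ t : ℝ, 0 ≤ t → deriv lam t = Real.exp (-lam t) * (1 + lam t))

include hdiff h0 hode

lemma lam_gt_neg_one : ∀ t : ℝ, 0 ≤ t → -1 < lam t := by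
  by_contra hcon
  push_neg at hcon
  obtain ⟨t₁, ht₁, hle⟩ := hcon
  set A : Set ℝ := Set.Ici 0 ∩ lam ⁻¹' Set.Iic (-1) with hA
  have hAne : A.Nonempty := ⟨t₁, ht₁, hle⟩
  have hclosed : IsClosed A :=
    isClosed_Ici.inter (isClosed_Iic.preimage hdiff.continuous)
  have hbdd : BddBelow A := ⟨0, fun s hs => hs.1⟩
  set c := sInf A with hc
  have hcA : c ∈ A := hclosed.csInf_mem hAne hbdd
  have hc0 : 0 ≤ c := hcA.1
  have hcle : lam c ≤ -1 := hcA.2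
  have hcpos : 0 < c := by
    rcases hc0.lt_or_eq with h | h
    · exact h
    · exfalso; rw [← h, h0] at hcle; linarith
  have hbefore : ∀ s, 0 ≤ s → s < c → -1 < lam s := by
    intro s hs hsc
    by_contra hb
    push_neg at hb
    exact absurd (csInf_le hbdd ⟨hs, hb⟩) (not_le.2 hsc)
  have hmono : StrictMonoOn lam (Set.Icc 0 c) := by
    apply strictMonoOn_of_deriv_pos (convex_Icc 0 c) hdiff.continuous.continuousOn
    intro x hx
    rw [interior_Icc] at hx
    rw [hode x hx.1.le]
    have h1 := hbefore x hx.1.le hx.2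
    have := Real.exp_pos (-lam x)
    nlinarith
  have : lam 0 < lam c := hmono ⟨le_refl 0, hc0⟩ ⟨hc0, le_refl c⟩ hcpos
  rw [h0] at this; linarith

lemma lam_mono : MonotoneOn lam (Set.Ici 0) := by
  apply monotoneOn_of_deriv_nonneg (convex_Ici 0) hdiff.continuous.continuousOn
    hdiff.differentiableOn
  intro x hx
  rw [interior_Ici] at hx
  rw [hode x hx.le]
  have h1 := lam_gt_neg_one hdiff h0 hode x hx.le
  have := Real.exp_pos (-lam x)
  nlinarith

lemma lam_nonneg : ∀ t : ℝ, 0 ≤ t → 0 ≤ lam t := by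
  intro t ht
  have := lam_mono hdiff h0 hode (Set.self_mem_Ici) ht ht
  rwa [h0] at this

lemma lam_hasDeriv : ∀ t : ℝ, 0 ≤ t →
    HasDerivAt lam (Real.exp (-lam t) * (1 + lam t)) t := by
  intro t ht
  have := (hdiff t).hasDerivAt
  rwa [hode t ht] at this

lemma lam_tendsto : Tendsto lam atTop atTop := by
  have key : ∀ M : ℝ, 0 ≤ M → ∃ t, 0 ≤ t ∧ M ≤ lam t := by
    intro M hM
    by_contra hcon
    push_neg at hcon
    have hlt : ∀ t, 0 ≤ t → lam t < M := fun t ht => hcon t ht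
    -- lam t ≥ exp (-M) * t on [0, ∞)
    have hg : MonotoneOn (fun t => lam t - Real.exp (-M) * t) (Set.Ici 0) := by
      apply monotoneOn_of_deriv_nonneg (convex_Ici 0)
        ((hdiff.sub (by fun_prop)).continuous.continuousOn)
        ((hdiff.sub (by fun_prop)).differentiableOn)
      intro x hx
      rw [interior_Ici] at hx
      have hd : HasDerivAt (fun t => lam t - Real.exp (-M) * t)
          (Real.exp (-lam x) * (1 + lam x) - Real.exp (-M) * 1) x :=
        (lam_hasDeriv hdiff h0 hode x hx.le).sub ((hasDerivAt_id x).const_mul _)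
      change 0 ≤ deriv (fun t => lam t - Real.exp (-M) * t) x
      rw [hd.deriv]
      have h1 : Real.exp (-M) ≤ Real.exp (-lam x) :=
        Real.exp_le_exp.2 (by linarith [hlt x hx.le])
      have h2 : 1 ≤ 1 + lam x := by linarith [lam_nonneg hdiff h0 hode x hx.le]
      nlinarith [Real.exp_pos (-lam x), Real.exp_pos (-M)]
    set t₀ := (M + 1) * Real.exp M with ht₀
    have ht₀0 : 0 ≤ t₀ := by positivity
    have := hg Set.self_mem_Ici ht₀0 ht₀0
    simp only [h0, zero_sub, mul_zero, sub_zero] at this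
    have hlam : Real.exp (-M) * t₀ ≤ lam t₀ := by linarith
    have : Real.exp (-M) * t₀ = M + 1 := by
      rw [ht₀, Real.exp_neg]
      field_simp
    linarith [hlt t₀ ht₀0]
  rw [tendsto_atTop]
  intro b
  obtain ⟨t₀, ht₀, hb⟩ := key (max b 0) (le_max_right _ _)
  rw [eventually_atTop]
  refine ⟨t₀, fun t ht => ?_⟩
  calc b ≤ max b 0 := le_max_left _ _
    _ ≤ lam t₀ := hb
    _ ≤ lam t := lam_mono hdiff h0 hode ht₀ (ht₀.trans ht) ht

end LamFacts


section Bridge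
variable {Δ : ℕ} {r : ℕ → ℝ} {lam : ℝ → ℝ} (hdiff : Differentiable ℝ lam) (h0 : lam 0 = 0)
  (hode : ∀ t : ℝ, 0 ≤ t → deriv lam t = Real.exp (-lam t) * (1 + lam t))

include hdiff h0 hode

lemma derivlam_hasDeriv {t : ℝ} (ht : 0 < t) :
    HasDerivAt (deriv lam)
      (-(lam t) * Real.exp (-lam t) * (Real.exp (-lam t) * (1 + lam t))) t := by
  have hl := lam_hasDeriv hdiff h0 hode t ht.le
  have hexp : HasDerivAt (fun u => Real.exp (-lam u))
      (-(Real.exp (-lam t)) * (Real.exp (-lam t) * (1 + lam t))) t := by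
    have h := (hl.neg).exp
    exact h.congr_deriv (by simp only [Pi.neg_apply]; ring)
  have hlin : HasDerivAt (fun u => 1 + lam u) (Real.exp (-lam t) * (1 + lam t)) t :=
    hl.const_add 1
  have h1 := hexp.mul hlin
  have heq : deriv lam =ᶠ[nhds t] fun u => Real.exp (-lam u) * (1 + lam u) := by
    filter_upwards [Ioi_mem_nhds ht] with u hu
    exact hode u (le_of_lt hu)
  have h2 := h1.congr_of_eventuallyEq heq
  exact h2.congr_deriv (by ring)

lemma LamErr_eq_Ffun : LamErr lam Δ r = fun t => deriv lam t * Ffun Δ r (lam t) := rfl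

lemma LamErr_hasDeriv {t : ℝ} (ht : 0 < t) :
    HasDerivAt (LamErr lam Δ r)
      (-(lam t) * Real.exp (-lam t) * (Real.exp (-lam t) * (1 + lam t)) * Ffun Δ r (lam t)
        + (Real.exp (-lam t) * (1 + lam t)) *
          (Real.exp (lam t) / (1 + lam t) ^ 2 * ppoly Δ r (lam t)
            * (Real.exp (-lam t) * (1 + lam t)))) t := by
  have hy := lam_nonneg hdiff h0 hode t ht.le
  have hF : HasDerivAt (fun u => Ffun Δ r (lam u))
      (Real.exp (lam t) / (1 + lam t) ^ 2 * ppoly Δ r (lam t)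
        * (Real.exp (-lam t) * (1 + lam t))) t :=
    (Ffun_hasDeriv hy).comp t (lam_hasDeriv hdiff h0 hode t ht.le)
  rw [LamErr_eq_Ffun (Δ := Δ) (r := r) hdiff h0 hode]
  have h := (derivlam_hasDeriv hdiff h0 hode ht).mul hF
  rw [hode t ht.le] at h
  exact h

lemma Herr_eq {t : ℝ} (ht : 0 < t) :
    Herr lam Δ r t * (lam t) ^ 2
      = Gd Δ r (lam t) * (Real.exp (-lam t) * (1 + lam t)) := by
  have hy := lam_nonneg hdiff h0 hode t ht.le
  have h1y : (0:ℝ) < 1 + lam t := by linarith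
  unfold Herr
  rw [(LamErr_hasDeriv hdiff h0 hode ht).deriv, hode t ht.le]
  have hL : LamErr lam Δ r t = deriv lam t * Ffun Δ r (lam t) := rfl
  rw [hL, hode t ht.le]
  have hq : (∑ k ∈ Finset.range (Δ - 1), lam t ^ k / (Nat.factorial k : ℝ) * r (k + 2))
      = qpoly Δ r (lam t) := rfl
  rw [hq]
  unfold Gd
  rw [Real.exp_neg]
  have hexp : Real.exp (lam t) ≠ 0 := Real.exp_ne_zero _
  field_simp
  ring

omit hdiff h0 hode in
lemma Gfun_zero : Gfun Δ r 0 = 0 := by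
  unfold Gfun Ffun cfun
  rw [intervalIntegral.integral_same, intervalIntegral.integral_same]
  ring

lemma betaAux_eq {t : ℝ} (ht : 0 ≤ t) : betaAux lam Δ r t = Gfun Δ r (lam t) := by
  have hstep1 : betaAux lam Δ r t
      = ∫ s in (0:ℝ)..t, Gd Δ r (lam s) * (Real.exp (-lam s) * (1 + lam s)) := by
    unfold betaAux
    apply intervalIntegral.integral_congr_ae
    filter_upwards with s hs
    rw [Set.uIoc_of_le ht] at hs
    exact Herr_eq hdiff h0 hode hs.1
  have hderiv : ∀ s ∈ Set.uIcc (0:ℝ) t, HasDerivAt (fun u => Gfun Δ r (lam u))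
      (Gd Δ r (lam s) * (Real.exp (-lam s) * (1 + lam s))) s := by
    intro s hs
    rw [Set.uIcc_of_le ht] at hs
    exact (G_hasDeriv (lam_nonneg hdiff h0 hode s hs.1)).comp s
      (lam_hasDeriv hdiff h0 hode s hs.1)
  have hcont : ContinuousOn (fun s => Gd Δ r (lam s) * (Real.exp (-lam s) * (1 + lam s)))
      (Set.uIcc (0:ℝ) t) := by
    intro s hs
    rw [Set.uIcc_of_le ht] at hs
    have hy := lam_nonneg hdiff h0 hode s hs.1
    have h1y : (1:ℝ) + lam s ≠ 0 := by linarith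
    have hlc : Continuous lam := hdiff.continuous
    have hFc : ContinuousAt (fun u => Ffun Δ r (lam u)) s :=
      ((Ffun_hasDeriv hy).comp s (lam_hasDeriv hdiff h0 hode s hs.1)).continuousAt
    have hqc : Continuous (fun u => qpoly Δ r (lam u)) := qpoly_cont.comp hlc
    have hpc : Continuous (fun u => ppoly Δ r (lam u)) := ppoly_cont.comp hlc
    apply ContinuousAt.continuousWithinAt
    have hGd : ContinuousAt (fun u => Gd Δ r (lam u)) s := by
      unfold Gd
      apply ContinuousAt.sub
      · apply ContinuousAt.add
        · exact Continuous.continuousAt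
            (by fun_prop : Continuous fun u => Real.exp (-lam u) * lam u ^ 2 * qpoly Δ r (lam u))
        · apply ContinuousAt.mul ?_ hpc.continuousAt
          exact ContinuousAt.div
            (Continuous.continuousAt
              (by fun_prop : Continuous fun u => Real.exp (-lam u) * lam u ^ 2))
            ((continuous_const.add hlc).continuousAt) h1y
      · exact ContinuousAt.mul
          (Continuous.continuousAt (by fun_prop :
            Continuous fun u => Real.exp (-lam u) ^ 2 * (1 + 2 * lam u) * lam u ^ 2)) hFc
    exact hGd.mul (Continuous.continuousAt
      (by fun_prop : Continuous fun u => Real.exp (-lam u) * (1 + lam u)))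
  rw [hstep1, intervalIntegral.integral_eq_sub_of_hasDerivAt hderiv
    hcont.intervalIntegrable]
  rw [h0, Gfun_zero]
  ring
end Bridge


/-- Bound and uniform limit for `β_r`: `|β_r(t)| ≤ 2Δ²(Δ+1)` and
`β_r(t) → Υ_r` as `t → ∞` uniformly in `r ∈ R_Δ`. -/
theorem beta_bound_and_limit (Δ : ℕ) (hΔ : 3 ≤ Δ) (lam : ℝ → ℝ)
    (hdiff : Differentiable ℝ lam) (h0 : lam 0 = 0)
    (hode : ∀ t : ℝ, 0 ≤ t → deriv lam t = Real.exp (-lam t) * (1 + lam t)) :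
    (∀ r : ℕ → ℝ, memR Δ r → ∀ t : ℝ, 0 ≤ t →
      |betaAux lam Δ r t| ≤ 2 * (Δ : ℝ) ^ 2 * ((Δ : ℝ) + 1)) ∧
    (∀ η : ℝ, 0 < η → ∃ T : ℝ, 0 < T ∧ ∀ t : ℝ, T ≤ t → ∀ r : ℕ → ℝ, memR Δ r →
      |betaAux lam Δ r t - Upsilon Δ r| ≤ η) := by
  constructor
  · intro r hr t ht
    rw [betaAux_eq hdiff h0 hode ht]
    exact G_bound hΔ hr (lam_nonneg hdiff h0 hode t ht)
  · intro η hη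
    set b : ℝ → ℝ := fun y => ((Δ : ℝ) + 1) ^ 5 * (Real.exp (-y) * (1 + y) ^ (Δ + 2)) with hb
    have htend : Tendsto b atTop (nhds 0) := by
      have h1 : Tendsto (fun y : ℝ => (1 + y) ^ (Δ + 2) * Real.exp (-(1 + y))) atTop (nhds 0) :=
        (tendsto_pow_mul_exp_neg_atTop_nhds_zero (Δ + 2)).comp
          (tendsto_atTop_add_const_left _ 1 tendsto_id)
      have h2 : b = fun y => (((Δ : ℝ) + 1) ^ 5 * Real.exp 1) *
          ((1 + y) ^ (Δ + 2) * Real.exp (-(1 + y))) := by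
        funext y
        simp only [hb]
        have hye : Real.exp (-y) = Real.exp 1 * Real.exp (-(1 + y)) := by
          rw [← Real.exp_add]
          congr 1
          ring
        rw [hye]
        ring
      rw [h2]
      have := h1.const_mul (((Δ : ℝ) + 1) ^ 5 * Real.exp 1)
      simpa using this
    have hev : ∀ᶠ y in atTop, b y < η := htend.eventually_lt_const hη
    obtain ⟨Y, hY⟩ := eventually_atTop.mp hev
    have hlt := lam_tendsto hdiff h0 hode
    obtain ⟨T₀, hT₀⟩ := eventually_atTop.mp (hlt.eventually_ge_atTop Y)
    refine ⟨max T₀ 1, lt_of_lt_of_le one_pos (le_max_right _ _), ?_⟩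
    intro t hT r hr
    have ht0 : (0:ℝ) ≤ t := by
      have := le_max_right T₀ 1
      linarith
    rw [betaAux_eq hdiff h0 hode ht0]
    refine (G_err hΔ hr (lam_nonneg hdiff h0 hode t ht0)).trans ?_
    have hYlam : Y ≤ lam t := hT₀ t (le_trans (le_max_left _ _) hT)
    exact (hY (lam t) hYlam).le
end
end
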